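/- arXiv:2001.00251 — 10 statements merged into one kernel-verified Lean document; each statement's English description precedes it below -/
import Mathlib

section
/- If the Laplacian matrix of a weighted graph G on n vertices is diagonalisable by some complex Hadamard matrix, then G is weighted-regular, i.e., all diagonal entries of L(G) are equal. -/
open Matrix Complex

/-- `H` is a complex Hadamard matrix: unimodular entries and `H Hᴴ = n I`. -/
def IsCHadamard {I : Type*} [Fintype I] [DecidableEq I] (H : Matrix I I ℂ) : Prop :=
  (∀ i j, ‖H i j‖ = 1) ∧
    H * Hᴴ = (Fintype.card I : ℂ) • (1 : Matrix I I ℂ)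

/-- `M` is diagonalised by `H`: every column of `H` is an eigenvector of `M`. -/
def DiagBy {I : Type*} [Fintype I] (M H : Matrix I I ℂ) : Prop :=
  ∀ j : I, ∃ μ : ℂ, M.mulVec (fun i => H i j) = μ • (fun i => H i j)

/-- The Laplacian of a weighted graph given by its weighted adjacency matrix. -/
def lapOf {n : ℕ} (A : Matrix (Fin n) (Fin n) ℝ) : Matrix (Fin n) (Fin n) ℝ :=
  Matrix.diagonal (fun i => ∑ j, A i j) - A

/-- If the Laplacian of a weighted graph is diagonalisable by a complex Hadamard
matrix, then the graph is weighted-regular. -/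
theorem stmt0 {n : ℕ} (A : Matrix (Fin n) (Fin n) ℝ)
    (hsymm : A.IsSymm) (hnonneg : ∀ i j, 0 ≤ A i j) (hdiag : ∀ i, A i i = 0)
    (H : Matrix (Fin n) (Fin n) ℂ) (hH : IsCHadamard H)
    (hdiagby : DiagBy ((lapOf A).map (Complex.ofReal)) H) :
    ∀ i i' : Fin n, (lapOf A) i i = (lapOf A) i' i' := by
  intro i i'
  set Lc : Matrix (Fin n) (Fin n) ℂ := (lapOf A).map (Complex.ofReal) with hLc
  choose μ hμ using hdiagby
  have hcol : Lc * H = H * Matrix.diagonal μ := by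
    ext a b
    have h1 := congrFun (hμ b) a
    simp only [Matrix.mulVec, dotProduct, Pi.smul_apply, smul_eq_mul] at h1
    rw [Matrix.mul_apply, h1, Matrix.mul_apply, Finset.sum_eq_single b]
    · rw [Matrix.diagonal_apply_eq]; ring
    · intro c _ hc; rw [Matrix.diagonal_apply_ne _ hc]; ring
    · simp
  have key : (n : ℂ) • Lc = H * Matrix.diagonal μ * Hᴴ := by
    have h2 : Lc * (H * Hᴴ) = H * Matrix.diagonal μ * Hᴴ := by
      rw [← Matrix.mul_assoc, hcol]
    rw [hH.2] at h2
    simpa [Matrix.mul_smul, Fintype.card_fin] using h2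
  have hdiagval : ∀ a : Fin n, (n : ℂ) * Lc a a = ∑ j, μ j := by
    intro a
    have hk := congrFun (congrFun key a) a
    simp only [Matrix.smul_apply, smul_eq_mul] at hk
    rw [hk]
    have hterm : ∀ j, (H * Matrix.diagonal μ) a j * Hᴴ j a = μ j := by
      intro j
      have habs : H a j * star (H a j) = 1 := by
        rw [show star (H a j) = (starRingEnd ℂ) (H a j) from rfl, Complex.mul_conj]
        norm_cast
        simp [Complex.normSq_eq_norm_sq, hH.1 a j]
      simp only [Matrix.mul_apply, Matrix.conjTranspose_apply, Finset.sum_mul]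
      rw [Finset.sum_eq_single j]
      · rw [Matrix.diagonal_apply_eq]
        calc H a j * μ j * star (H a j) = μ j * (H a j * star (H a j)) := by ring
          _ = μ j := by rw [habs, mul_one]
      · intro b _ hb; rw [Matrix.diagonal_apply_ne _ hb]; ring
      · simp
    rw [Matrix.mul_apply]
    exact Finset.sum_congr rfl (fun j _ => hterm j)
  have hn : (n : ℂ) ≠ 0 := by
    have : 0 < n := i.pos
    exact_mod_cast this.ne'
  have heq : Lc i i = Lc i' i' := by
    have := (hdiagval i).trans (hdiagval i').symm
    exact mul_left_cancel₀ hn this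
  have : ((lapOf A) i i : ℂ) = ((lapOf A) i' i' : ℂ) := by
    simpa [hLc, Matrix.map_apply] using heq
  exact_mod_cast this
end

section
/- If the adjacency matrix of a weighted graph G (symmetric, entrywise nonnegative, zero diagonal) is diagonalisable by some complex Hadamard matrix, then G is weighted-regular: all row sums of the adjacency matrix are equal. -/
open Matrix Complex

/-- If the adjacency matrix of a weighted graph is diagonalisable by a complex
Hadamard matrix, then the graph is weighted-regular (all row sums equal). -/
theorem stmt1 {n : ℕ} (A : Matrix (Fin n) (Fin n) ℝ)
    (hsymm : A.IsSymm) (hnonneg : ∀ i j, 0 ≤ A i j) (hdiag : ∀ i, A i i = 0)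
    (H : Matrix (Fin n) (Fin n) ℂ) (hH : IsCHadamard H)
    (hdiagby : DiagBy (A.map (Complex.ofReal)) H) :
    ∀ i i' : Fin n, ∑ j, A i j = ∑ j, A i' j := by
  obtain ⟨hU, hHH⟩ := hH
  choose μ hμ using hdiagby
  intro i i'
  have hn : 0 < n := i.pos
  have hnℝ : (n : ℝ) ≠ 0 := by exact_mod_cast hn.ne'
  have hnℂ : (n : ℂ) ≠ 0 := by exact_mod_cast hn.ne'
  have hent : ∀ a b : Fin n, ∑ k, H a k * (starRingEnd ℂ) (H b k) = if a = b then (n:ℂ) else 0 := by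
    intro a b
    have := congrFun (congrFun hHH a) b
    simpa [Matrix.mul_apply, Matrix.conjTranspose_apply, Matrix.one_apply, Matrix.smul_apply,
      smul_eq_mul, mul_ite, mul_one, mul_zero] using this
  have heig : ∀ k i0, ∑ j, (A i0 j : ℂ) * H j k = μ k * H i0 k := by
    intro k i0
    have := congrFun (hμ k) i0
    simpa [Matrix.mulVec, dotProduct, Matrix.map_apply] using this
  set r : Fin n → ℝ := fun i0 => ∑ j, A i0 j with hr
  have ha : ∀ k i0, ‖μ k‖ ≤ r i0 := by
    intro k i0
    have h1 : ‖μ k‖ = ‖μ k * H i0 k‖ := by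
      rw [norm_mul, hU i0 k, mul_one]
    rw [h1, ← heig k i0]
    calc ‖∑ j, (A i0 j : ℂ) * H j k‖
        ≤ ∑ j, ‖(A i0 j : ℂ) * H j k‖ := norm_sum_le _ _
      _ = ∑ j, A i0 j := by
          refine Finset.sum_congr rfl fun j _ => ?_
          rw [norm_mul, hU j k, mul_one, Complex.norm_real, Real.norm_eq_abs, _root_.abs_of_nonneg (hnonneg i0 j)]
  set c : Fin n → ℂ := fun k => (∑ j, (starRingEnd ℂ) (H j k)) / n with hc
  have hconj : ∀ k, (starRingEnd ℂ) (c k) = (∑ j, H j k) / n := by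
    intro k; simp [hc, map_div₀, map_sum]
  have fact1 : ∀ i0, ∑ k, c k * H i0 k = 1 := by
    intro i0
    have e1 : ∀ k, c k * H i0 k = (∑ j, H i0 k * (starRingEnd ℂ) (H j k)) / n := by
      intro k
      rw [hc, div_mul_eq_mul_div, Finset.sum_mul]
      congr 1
      exact Finset.sum_congr rfl fun j _ => mul_comm _ _
    simp only [e1, ← Finset.sum_div]
    rw [Finset.sum_comm]
    simp only [hent]
    simp [div_self hnℂ]
  have fact2 : ∑ k, Complex.normSq (c k) = 1 := by
    have e2 : ∀ k, c k * (starRingEnd ℂ) (c k) =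
        (∑ j, ∑ j', H j' k * (starRingEnd ℂ) (H j k)) / ((n:ℂ) * n) := by
      intro k
      rw [hconj k, hc, div_mul_div_comm]
      congr 1
      rw [Finset.sum_mul]
      refine Finset.sum_congr rfl fun j _ => ?_
      rw [Finset.mul_sum]
      exact Finset.sum_congr rfl fun j' _ => mul_comm _ _
    have : ∑ k, c k * (starRingEnd ℂ) (c k) = 1 := by
      simp only [e2, ← Finset.sum_div]
      rw [Finset.sum_comm]
      have : ∀ j : Fin n, ∑ k, ∑ j', H j' k * (starRingEnd ℂ) (H j k)
          = ∑ j', ∑ k, H j' k * (starRingEnd ℂ) (H j k) := fun j => Finset.sum_comm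
      simp only [this, hent]
      simp [Finset.sum_ite_eq, div_self (mul_ne_zero hnℂ hnℂ)]
    have h' : ((∑ k, Complex.normSq (c k) : ℝ) : ℂ) = ((1:ℝ):ℂ) := by
      push_cast
      simpa [Complex.mul_conj] using this
    exact_mod_cast h'
  have fact3 : ((∑ i0, r i0 : ℝ) : ℂ) = n * ∑ k, μ k * (Complex.normSq (c k) : ℂ) := by
    have step1 : ((∑ i0, r i0 : ℝ) : ℂ) = ∑ i0, ∑ j, (A i0 j : ℂ) := by
      push_cast [hr]; rfl
    have step2 : ∀ i0 j : Fin n, (A i0 j : ℂ) = ∑ k, (A i0 j : ℂ) * (c k * H j k) := by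
      intro i0 j
      rw [← Finset.mul_sum, fact1 j, mul_one]
    rw [step1]
    calc ∑ i0, ∑ j, (A i0 j : ℂ)
        = ∑ i0, ∑ j, ∑ k, (A i0 j : ℂ) * (c k * H j k) := by
          exact Finset.sum_congr rfl fun i0 _ => Finset.sum_congr rfl fun j _ => step2 i0 j
      _ = ∑ k, ∑ i0, ∑ j, (A i0 j : ℂ) * (c k * H j k) := by
          rw [show (∑ i0, ∑ j, ∑ k, (A i0 j : ℂ) * (c k * H j k))
              = ∑ i0, ∑ k, ∑ j, (A i0 j : ℂ) * (c k * H j k) from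
              Finset.sum_congr rfl fun i0 _ => Finset.sum_comm]
          exact Finset.sum_comm
      _ = ∑ k, c k * ∑ i0, ∑ j, (A i0 j : ℂ) * H j k := by
          refine Finset.sum_congr rfl fun k _ => ?_
          rw [Finset.mul_sum]
          refine Finset.sum_congr rfl fun i0 _ => ?_
          rw [Finset.mul_sum]
          exact Finset.sum_congr rfl fun j _ => by ring
      _ = ∑ k, c k * (μ k * ∑ i0, H i0 k) := by
          refine Finset.sum_congr rfl fun k _ => ?_
          congr 1
          rw [Finset.mul_sum]
          exact Finset.sum_congr rfl fun i0 _ => heig k i0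
      _ = ∑ k, c k * (μ k * ((n:ℂ) * (starRingEnd ℂ) (c k))) := by
          refine Finset.sum_congr rfl fun k _ => ?_
          rw [hconj k, mul_div_cancel₀ _ hnℂ]
      _ = n * ∑ k, μ k * (Complex.normSq (c k) : ℂ) := by
          rw [Finset.mul_sum]
          refine Finset.sum_congr rfl fun k _ => ?_
          rw [← Complex.mul_conj]
          ring
  -- real part
  have fact3' : (∑ i0, r i0) = n * ∑ k, (μ k).re * Complex.normSq (c k) := by
    have := congrArg Complex.re fact3
    simpa [Complex.ofReal_re, Complex.mul_re, Complex.re_sum, Complex.im_sum,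
      Complex.mul_im, Finset.mul_sum, Finset.sum_mul] using this
  have key : ∀ i0, (∑ j0, r j0) ≤ n * r i0 := by
    intro i0
    rw [fact3']
    have : ∑ k, (μ k).re * Complex.normSq (c k) ≤ ∑ k, r i0 * Complex.normSq (c k) := by
      refine Finset.sum_le_sum fun k _ => ?_
      exact mul_le_mul_of_nonneg_right ((Complex.re_le_norm _).trans (ha k i0)) (Complex.normSq_nonneg _)
    calc (n:ℝ) * ∑ k, (μ k).re * Complex.normSq (c k)
        ≤ (n:ℝ) * ∑ k, r i0 * Complex.normSq (c k) := by
          exact mul_le_mul_of_nonneg_left this (by positivity)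
      _ = n * r i0 := by rw [← Finset.mul_sum, fact2, mul_one]
  -- conclude all equal
  have h0 : ∑ i0, ((n:ℝ) * r i0 - ∑ j0, r j0) = 0 := by
    rw [Finset.sum_sub_distrib, ← Finset.mul_sum]
    simp [Finset.card_univ, mul_comm]
  have hz := (Finset.sum_eq_zero_iff_of_nonneg (fun i0 _ => sub_nonneg.2 (key i0))).1 h0
  have e1 := hz i (Finset.mem_univ i)
  have e2 := hz i' (Finset.mem_univ i')
  have : (n:ℝ) * r i = (n:ℝ) * r i' := by linarith [sub_eq_zero.1 e1, sub_eq_zero.1 e2]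
  exact mul_left_cancel₀ hnℝ this
end

section
/- Let H be a dephased complex Hadamard matrix of order n (n even) possessing a column h_j ≠ 1 all of whose entries are ±1. Then the matrix (n/2)I + (1/2)(h_j h_j* − J) is the Laplacian matrix of the complete bipartite graph K_{n/2,n/2} (with parts determined by the sign pattern of h_j), and it is diagonalised by H. -/
open Matrix Complex

/-- `H` is dephased: its first row and first column consist of ones. -/
def IsDephased {n : ℕ} [NeZero n] (H : Matrix (Fin n) (Fin n) ℂ) : Prop :=
  (∀ i, H i 0 = 1) ∧ (∀ j, H 0 j = 1)

/-- If a dephased complex Hadamard matrix `H` of even order `n` has a column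
`h_c ≠ 𝟏` all of whose entries are `±1`, then
`(n/2)I + (1/2)(h_c h_c* − J)` is the Laplacian of the complete bipartite
graph `K_{n/2,n/2}` (with parts given by the sign pattern of `h_c`), and it
is diagonalised by `H`. -/
theorem stmt4 {n : ℕ} [NeZero n] (hn : Even n)
    (H : Matrix (Fin n) (Fin n) ℂ) (hH : IsCHadamard H) (hd : IsDephased H)
    (c : Fin n) (hpm : ∀ i, H i c = 1 ∨ H i c = -1)
    (hne : (fun i => H i c) ≠ (fun _ => (1 : ℂ)))
    (M : Matrix (Fin n) (Fin n) ℂ)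
    (hM : M = ((n : ℂ) / 2) • (1 : Matrix (Fin n) (Fin n) ℂ) +
        (1 / 2 : ℂ) • (Matrix.vecMulVec (fun i => H i c) (fun i => star (H i c))
          - Matrix.of (fun _ _ => (1 : ℂ)))) :
    (Finset.univ.filter (fun i => H i c = 1)).card = n / 2 ∧
    (∀ i, M i i = (n : ℂ) / 2) ∧
    (∀ i i', i ≠ i' → M i i' = if H i c = H i' c then 0 else -1) ∧
    DiagBy M H := by
  obtain ⟨hd1, hd2⟩ := hd
  have hn0 : (n : ℂ) ≠ 0 := Nat.cast_ne_zero.mpr (NeZero.ne n)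
  have hinv : Hᴴ * H = (n : ℂ) • 1 := by
    have h1 : H * ((n : ℂ)⁻¹ • Hᴴ) = 1 := by
      rw [Matrix.mul_smul, hH.2, Fintype.card_fin, smul_smul, inv_mul_cancel₀ hn0, one_smul]
    have h2 : ((n : ℂ)⁻¹ • Hᴴ) * H = 1 := mul_eq_one_comm.mp h1
    calc Hᴴ * H = (n : ℂ) • (((n : ℂ)⁻¹ • Hᴴ) * H) := by
          rw [Matrix.smul_mul, smul_smul, mul_inv_cancel₀ hn0, one_smul]
      _ = (n : ℂ) • 1 := by rw [h2]
  have orth : ∀ j j' : Fin n, j ≠ j' → ∑ i, star (H i j) * H i j' = 0 := by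
    intro j j' h
    have := congrFun (congrFun hinv j) j'
    simpa [Matrix.mul_apply, Matrix.conjTranspose_apply, Matrix.one_apply, h,
      Matrix.smul_apply] using this
  have hc0 : c ≠ 0 := by
    intro h; apply hne; funext i; subst h; exact hd1 i
  have hsumc : ∑ i, H i c = 0 := by
    have := orth 0 c (Ne.symm hc0)
    simpa [hd1] using this
  have hnormc : ∀ j : Fin n, ∑ i, star (H i c) * H i j = if j = c then (n : ℂ) else 0 := by
    intro j
    by_cases h : j = c
    · rw [if_pos h, h]
      have he : ∀ i, star (H i c) * H i c = 1 := by
        intro i; rcases hpm i with h' | h' <;> simp [h']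
      rw [Finset.sum_congr rfl (fun i _ => he i)]
      simp [Finset.card_univ]
    · rw [if_neg h]
      exact orth c j (Ne.symm h)
  have hsum1 : ∀ j : Fin n, ∑ i, H i j = if j = 0 then (n : ℂ) else 0 := by
    intro j
    by_cases h : j = 0
    · subst h; simp [hd1, Finset.card_univ]
    · have h2 := orth 0 j (Ne.symm h)
      simp only [hd1, star_one, one_mul] at h2
      rw [if_neg h]
      exact h2
  refine ⟨?_, ?_, ?_, ?_⟩
  · -- cardinality
    set S := Finset.univ.filter (fun i => H i c = 1) with hS
    set T := Finset.univ.filter (fun i => ¬ H i c = 1) with hT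
    have hsplit : ∑ i ∈ S, H i c + ∑ i ∈ T, H i c = 0 := by
      rw [Finset.sum_filter_add_sum_filter_not]; exact hsumc
    have hSv : ∑ i ∈ S, H i c = (S.card : ℂ) := by
      rw [Finset.sum_congr rfl (fun i hi => (Finset.mem_filter.mp hi).2)]
      simp [hS]
    have hTv : ∑ i ∈ T, H i c = -(T.card : ℂ) := by
      have : ∀ i ∈ T, H i c = -1 := by
        intro i hi
        rcases hpm i with h | h
        · exact absurd h (Finset.mem_filter.mp hi).2
        · exact h
      rw [Finset.sum_congr rfl this]
      simp
    have hcards : S.card + T.card = n := by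
      have := Finset.card_filter_add_card_filter_not (s := Finset.univ)
        (p := fun i : Fin n => H i c = 1)
      simpa [hS, hT, Finset.card_univ] using this
    have heq : (S.card : ℂ) = (T.card : ℂ) := by
      rw [hSv, hTv] at hsplit; linear_combination hsplit
    have heqn : S.card = T.card := Nat.cast_inj.mp heq
    omega
  · intro i
    have h1 : H i c * star (H i c) = 1 := by
      rcases hpm i with h | h <;> simp [h]
    simp only [hM, Matrix.add_apply, Matrix.smul_apply, Matrix.one_apply_eq, Matrix.sub_apply,
      Matrix.vecMulVec_apply, Matrix.of_apply, smul_eq_mul]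
    rw [h1]
    ring
  · intro i i' hne'
    have key : H i c * star (H i' c) = if H i c = H i' c then 1 else -1 := by
      rcases hpm i with h | h <;> rcases hpm i' with h' | h' <;> simp [h, h'] <;> norm_num
    simp only [hM, Matrix.add_apply, Matrix.smul_apply, Matrix.one_apply_ne hne',
      Matrix.sub_apply, Matrix.vecMulVec_apply, Matrix.of_apply, smul_eq_mul]
    rw [key]
    by_cases h : H i c = H i' c
    · rw [if_pos h, if_pos h]; ring
    · rw [if_neg h, if_neg h]; ring
  · -- DiagBy
    intro j
    have hmv : M.mulVec (fun i => H i j) =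
        ((n : ℂ) / 2) • (fun i => H i j) +
          (1 / 2 : ℂ) • ((∑ i, star (H i c) * H i j) • (fun i => H i c)
            - (∑ i, H i j) • (fun _ : Fin n => (1 : ℂ))) := by
      have e2 : (Matrix.vecMulVec (fun i => H i c) (fun i => star (H i c))).mulVec
          (fun i => H i j) = (∑ i, star (H i c) * H i j) • (fun i => H i c) := by
        funext ix
        simp only [Matrix.mulVec, dotProduct, Matrix.vecMulVec_apply, Pi.smul_apply,
          smul_eq_mul]
        rw [Finset.sum_mul]
        apply Finset.sum_congr rfl
        intro k _
        ring
      have e3 : (Matrix.of fun _ _ => (1 : ℂ)).mulVec (fun i => H i j) =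
          (∑ i, H i j) • (fun _ : Fin n => (1 : ℂ)) := by
        funext ix
        simp [Matrix.mulVec, dotProduct]
      rw [hM, Matrix.add_mulVec, Matrix.smul_mulVec, Matrix.one_mulVec,
        Matrix.smul_mulVec, Matrix.sub_mulVec, e2, e3]
    by_cases hjc : j = c
    · subst hjc
      refine ⟨(n : ℂ), ?_⟩
      rw [hmv, hnormc j, hsum1 j, if_pos rfl, if_neg hc0]
      funext ix
      simp only [Pi.add_apply, Pi.smul_apply, Pi.sub_apply, Pi.neg_apply, smul_eq_mul,
        zero_mul, zero_smul, Pi.zero_apply, sub_zero]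
      ring
    · by_cases hj0 : j = 0
      · subst hj0
        refine ⟨0, ?_⟩
        rw [hmv, hnormc 0, hsum1 0, if_neg (Ne.symm hc0), if_pos rfl]
        funext ix
        simp only [Pi.add_apply, Pi.smul_apply, Pi.sub_apply, Pi.neg_apply, smul_eq_mul,
          zero_mul, zero_smul, Pi.zero_apply, zero_sub, hd1]
        ring
      · refine ⟨(n : ℂ) / 2, ?_⟩
        rw [hmv, hnormc j, hsum1 j, if_neg hjc, if_neg hj0]
        funext ix
        simp only [Pi.add_apply, Pi.smul_apply, Pi.sub_apply, Pi.neg_apply, smul_eq_mul,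
          zero_mul, zero_smul, Pi.zero_apply, sub_zero]
        ring
end

section
/- If A(G1) and A(G2) are adjacency matrices of weighted graphs on the same number n of vertices, each diagonalised by a complex Hadamard matrix H, then the block matrix [[w1 A(G1), w2 A(G2)],[w2 A(G2), w1 A(G1)]] (the merge of G1 and G2 with weights w1, w2) is diagonalised by the complex Hadamard matrix [[H, H],[H, −H]]. -/
open Matrix Complex

/-- The merge `[[w1 A1, w2 A2],[w2 A2, w1 A1]]` of two weighted graphs whose
adjacency matrices are diagonalised by `H` is diagonalised by the complex
Hadamard matrix `[[H, H],[H, −H]]`. -/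
theorem stmt7 {n : ℕ} (A₁ A₂ : Matrix (Fin n) (Fin n) ℝ)
    (hs₁ : A₁.IsSymm) (hs₂ : A₂.IsSymm)
    (hn₁ : ∀ i j, 0 ≤ A₁ i j) (hn₂ : ∀ i j, 0 ≤ A₂ i j)
    (hd₁ : ∀ i, A₁ i i = 0) (hd₂ : ∀ i, A₂ i i = 0)
    (H : Matrix (Fin n) (Fin n) ℂ) (hH : IsCHadamard H)
    (h₁ : DiagBy (A₁.map Complex.ofReal) H)
    (h₂ : DiagBy (A₂.map Complex.ofReal) H)
    (w₁ w₂ : ℝ) :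
    IsCHadamard (Matrix.fromBlocks H H H (-H)) ∧
      DiagBy
        (Matrix.fromBlocks ((w₁ : ℂ) • A₁.map Complex.ofReal)
          ((w₂ : ℂ) • A₂.map Complex.ofReal)
          ((w₂ : ℂ) • A₂.map Complex.ofReal)
          ((w₁ : ℂ) • A₁.map Complex.ofReal))
        (Matrix.fromBlocks H H H (-H)) := by
  constructor
  · constructor
    · intro i j
      cases i <;> cases j <;>
        simp [Matrix.fromBlocks, hH.1 _ _]
    · have h2 := hH.2
      rw [Matrix.fromBlocks_conjTranspose, Matrix.fromBlocks_multiply]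
      have hm : H * (-H)ᴴ = -(H * Hᴴ) := by simp
      ext i j
      cases i <;> cases j <;>
        simp [Matrix.fromBlocks, h2, Matrix.one_apply, Fintype.card_sum,
          Sum.inl.injEq, Sum.inr.injEq, two_mul, Matrix.smul_apply] <;>
        split <;> simp_all <;> ring
  · rintro (j | j)
    · obtain ⟨μ₁, hμ₁⟩ := h₁ j
      obtain ⟨μ₂, hμ₂⟩ := h₂ j
      refine ⟨w₁ * μ₁ + w₂ * μ₂, ?_⟩
      have hv : (fun i => Matrix.fromBlocks H H H (-H) i (Sum.inl j)) =
          Sum.elim (fun i => H i j) (fun i => H i j) := by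
        funext i; cases i <;> rfl
      rw [hv, Matrix.fromBlocks_mulVec]
      funext i
      cases i <;>
        simp [Matrix.smul_mulVec, hμ₁, hμ₂, Pi.add_apply, Pi.smul_apply,
          smul_eq_mul] <;> ring
    · obtain ⟨μ₁, hμ₁⟩ := h₁ j
      obtain ⟨μ₂, hμ₂⟩ := h₂ j
      refine ⟨w₁ * μ₁ - w₂ * μ₂, ?_⟩
      have hv : (fun i => Matrix.fromBlocks H H H (-H) i (Sum.inr j)) =
          Sum.elim (fun i => H i j) (fun i => -H i j) := by
        funext i; cases i <;> rfl
      rw [hv, Matrix.fromBlocks_mulVec]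
      have hneg : (A₂.map Complex.ofReal).mulVec (fun i => -H i j)
          = fun i => -(μ₂ * H i j) := by
        have e : (fun i => -H i j) = -(fun i => H i j) := rfl
        rw [e, Matrix.mulVec_neg, hμ₂]; funext i; simp
      have hneg1 : (A₁.map Complex.ofReal).mulVec (fun i => -H i j)
          = fun i => -(μ₁ * H i j) := by
        have e : (fun i => -H i j) = -(fun i => H i j) := rfl
        rw [e, Matrix.mulVec_neg, hμ₁]; funext i; simp
      funext i
      cases i <;>
        simp [hneg, hneg1, Matrix.smul_mulVec, hμ₁, hμ₂, Pi.add_apply,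
          Pi.smul_apply, smul_eq_mul] <;> ring
end

section
/- Let G be an unweighted d-regular graph whose Laplacian is diagonalised by a dephased complex Hadamard matrix H, and suppose a column h_k (k > 1) of H has all entries in {1, −1, i, −i}, with L(G) h_k = λ_k h_k. Then λ_k is an even integer, and the partition of the vertex set into S = {u : h_k(u) ∈ {1, i}} and its complement is an equitable partition into two cells of size n/2 each, where every vertex of each cell has exactly λ_k/2 neighbours in the other cell and d − λ_k/2 neighbours in its own cell. -/
open Matrix Complex

set_option maxHeartbeats 1600000 in
/-- If a `d`-regular graph `G` is diagonalised by a dephased complex Hadamard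
matrix with a column `h_k` (k > 1) taking values in `{±1, ±i}` and
`L(G) h_k = λ h_k`, then `λ = 2m` is an even integer and
`S = {u : h_k(u) ∈ {1, i}}` together with its complement forms an equitable
partition into two cells of size `n/2`, where each vertex has `m = λ/2`
neighbours in the opposite cell and `d − m` neighbours in its own cell. -/
theorem stmt9 {n : ℕ} [NeZero n] (G : SimpleGraph (Fin n)) [DecidableRel G.Adj]
    (d : ℕ) (hreg : ∀ v, G.degree v = d)
    (H : Matrix (Fin n) (Fin n) ℂ) (hH : IsCHadamard H) (hd : IsDephased H)
    (hdiag : DiagBy (G.lapMatrix ℂ) H)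
    (k : Fin n) (hk : k ≠ 0)
    (hvals : ∀ u, H u k = 1 ∨ H u k = -1 ∨ H u k = Complex.I ∨ H u k = -Complex.I)
    (lam : ℂ) (hlam : (G.lapMatrix ℂ).mulVec (fun u => H u k) = lam • (fun u => H u k)) :
    ∃ m : ℕ, lam = 2 * m ∧ m ≤ d ∧
      (Finset.univ.filter (fun u => H u k = 1 ∨ H u k = Complex.I)).card = n / 2 ∧
      (∀ u : Fin n,
        (Finset.univ.filter (fun v => G.Adj u v ∧
          ¬ ((v ∈ Finset.univ.filter (fun w => H w k = 1 ∨ H w k = Complex.I)) ↔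
             (u ∈ Finset.univ.filter (fun w => H w k = 1 ∨ H w k = Complex.I))))).card = m ∧
        (Finset.univ.filter (fun v => G.Adj u v ∧
          ((v ∈ Finset.univ.filter (fun w => H w k = 1 ∨ H w k = Complex.I)) ↔
           (u ∈ Finset.univ.filter (fun w => H w k = 1 ∨ H w k = Complex.I))))).card = d - m) := by
  classical
  have hn : (n : ℂ) ≠ 0 := Nat.cast_ne_zero.mpr (NeZero.ne n)
  set h : Fin n → ℂ := fun u => H u k with hh
  have hunit : ∀ u, (starRingEnd ℂ) (h u) * h u = 1 := by
    intro u
    rw [mul_comm, Complex.mul_conj]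
    norm_cast
    rw [Complex.normSq_eq_norm_sq, hH.1 u k, one_pow]
  have hLreal : ∀ u v, (starRingEnd ℂ) (G.lapMatrix ℂ u v) = G.lapMatrix ℂ u v := by
    intro u v
    simp only [SimpleGraph.lapMatrix, SimpleGraph.degMatrix, Matrix.sub_apply,
      Matrix.diagonal_apply, SimpleGraph.adjMatrix_apply, map_sub, apply_ite]
    split_ifs <;> simp
  have hA : ∑ u, (starRingEnd ℂ) (h u) * (G.lapMatrix ℂ).mulVec h u = lam * n := by
    rw [hlam]
    simp only [Pi.smul_apply, smul_eq_mul]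
    have e : ∀ x, (starRingEnd ℂ) (h x) * (lam * h x)
        = lam * ((starRingEnd ℂ) (h x) * h x) := fun x => by ring
    simp_rw [e, hunit, mul_one, Finset.sum_const, Finset.card_univ, Fintype.card_fin,
      nsmul_eq_mul, mul_comm]
  have hAconj : (starRingEnd ℂ) (lam * n) = lam * n := by
    conv_lhs => rw [← hA]
    rw [map_sum]
    calc ∑ u, (starRingEnd ℂ) ((starRingEnd ℂ) (h u) * (G.lapMatrix ℂ).mulVec h u)
        = ∑ u, ∑ v, h u * (G.lapMatrix ℂ v u * (starRingEnd ℂ) (h v)) := by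
          refine Finset.sum_congr rfl fun u _ => ?_
          rw [_root_.map_mul, Complex.conj_conj]
          simp only [Matrix.mulVec, dotProduct, map_sum, _root_.map_mul, hLreal]
          rw [Finset.mul_sum]
          exact Finset.sum_congr rfl fun v _ => by
            rw [(SimpleGraph.isSymm_lapMatrix ℂ G).apply u v]
      _ = ∑ v, (starRingEnd ℂ) (h v) * ((G.lapMatrix ℂ).mulVec h v) := by
          rw [Finset.sum_comm]
          refine Finset.sum_congr rfl fun v _ => ?_
          simp only [Matrix.mulVec, dotProduct, Finset.mul_sum]
          refine Finset.sum_congr rfl fun u _ => ?_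
          ring
      _ = lam * n := hA
  have hlamreal : lam = ((lam.re : ℝ) : ℂ) := by
    rw [_root_.map_mul, map_natCast] at hAconj
    have := mul_right_cancel₀ hn hAconj
    exact (Complex.conj_eq_iff_re.mp this).symm
  set r : ℝ := lam.re with hr
  set side : Fin n → Prop := fun u => H u k = 1 ∨ H u k = Complex.I with hsdef
  set g : Fin n → ℝ := fun u => (H u k).re + (H u k).im with hgdef
  -- case analysis on values
  have hcase : ∀ u, (side u ∧ g u = 1) ∨ (¬ side u ∧ g u = -1) := by
    intro u
    rcases hvals u with hv | hv | hv | hv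
    · exact Or.inl ⟨Or.inl hv, by simp [hgdef, hv]⟩
    · refine Or.inr ⟨?_, by simp [hgdef, hv]⟩
      rintro (hc | hc) <;> rw [hv] at hc <;> norm_num [Complex.ext_iff] at hc
    · exact Or.inl ⟨Or.inr hv, by simp [hgdef, hv]⟩
    · refine Or.inr ⟨?_, by simp [hgdef, hv]⟩
      rintro (hc | hc) <;> rw [hv] at hc <;> norm_num [Complex.ext_iff] at hc
  have hval2 : ∀ u v, ((side v ↔ side u) → g v = g u) ∧ (¬(side v ↔ side u) → g v = -g u) := by
    intro u v
    rcases hcase u with ⟨su, hu⟩ | ⟨su, hu⟩ <;> rcases hcase v with ⟨sv, hv2⟩ | ⟨sv, hv2⟩ <;>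
      rw [hu, hv2] <;> constructor <;> intro hiff <;> first | tauto | norm_num
  have hgne : ∀ u, g u ≠ 0 := by
    intro u
    rcases hcase u with ⟨_, hu⟩ | ⟨_, hu⟩ <;> rw [hu] <;> norm_num
  -- entrywise real equation
  have heq : ∀ u, (d : ℝ) * g u - ∑ v ∈ G.neighborFinset u, g v = r * g u := by
    intro u
    have h1 : (G.degree u : ℂ) * h u - ∑ v ∈ G.neighborFinset u, h v = lam * h u := by
      rw [← SimpleGraph.lapMatrix_mulVec_apply, hlam]; rfl
    rw [hreg u, hlamreal] at h1
    have hre := congrArg Complex.re h1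
    have him := congrArg Complex.im h1
    simp only [Complex.sub_re, Complex.sub_im, Complex.mul_re, Complex.mul_im,
      Complex.ofReal_re, Complex.ofReal_im, Complex.natCast_re, Complex.natCast_im,
      Complex.re_sum, Complex.im_sum, zero_mul, mul_zero, sub_zero, add_zero, zero_add] at hre him
    have hsum : ∑ v ∈ G.neighborFinset u, g v
        = (∑ v ∈ G.neighborFinset u, (h v).re) + ∑ v ∈ G.neighborFinset u, (h v).im := by
      rw [← Finset.sum_add_distrib]
    rw [hsum]
    have hgu : g u = (h u).re + (h u).im := rfl
    rw [hgu]
    linarith [hre, him]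
  -- counting
  set cfun : Fin n → ℕ := fun u => ((G.neighborFinset u).filter fun v => ¬(side v ↔ side u)).card
    with hcdef
  have hcards : ∀ u, (((G.neighborFinset u).filter fun v => (side v ↔ side u)).card) + cfun u = d := by
    intro u
    rw [hcdef]
    rw [Finset.card_filter_add_card_filter_not]
    rw [SimpleGraph.card_neighborFinset_eq_degree, hreg]
  have hrc : ∀ u, r = 2 * (cfun u : ℝ) := by
    intro u
    have hsplit := (Finset.sum_filter_add_sum_filter_not (G.neighborFinset u)
      (fun v => side v ↔ side u) g).symm
    have h1 : ∑ v ∈ (G.neighborFinset u).filter (fun v => (side v ↔ side u)), g v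
        = ((((G.neighborFinset u).filter fun v => (side v ↔ side u)).card : ℝ)) * g u := by
      rw [Finset.sum_congr rfl (fun v hv => (hval2 u v).1 (Finset.mem_filter.mp hv).2),
        Finset.sum_const, nsmul_eq_mul]
    have h2 : ∑ v ∈ (G.neighborFinset u).filter (fun v => ¬(side v ↔ side u)), g v
        = ((cfun u : ℝ)) * (-g u) := by
      rw [Finset.sum_congr rfl (fun v hv => (hval2 u v).2 (Finset.mem_filter.mp hv).2),
        Finset.sum_const, nsmul_eq_mul]
    have hc' : ((((G.neighborFinset u).filter fun v => (side v ↔ side u)).card : ℝ)) + (cfun u : ℝ)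
        = (d : ℝ) := by exact_mod_cast hcards u
    have he := heq u
    rw [hsplit, h1, h2] at he
    have := hgne u
    have hfin : (2 * (cfun u : ℝ)) * g u = r * g u := by linear_combination he + g u * hc'
    exact (mul_right_cancel₀ this hfin).symm
  -- column sum is zero
  have hcolsum : ∑ u, h u = 0 := by
    have h1 : H * ((n : ℂ)⁻¹ • Hᴴ) = 1 := by
      rw [Matrix.mul_smul, hH.2, Fintype.card_fin, smul_smul, inv_mul_cancel₀ hn, one_smul]
    have h2 := mul_eq_one_comm.mp h1
    have h3 : Hᴴ * H = (n : ℂ) • 1 := by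
      have h4 := congrArg (fun M => (n : ℂ) • M) h2
      simpa [Matrix.smul_mul, smul_smul, mul_inv_cancel₀ hn] using h4
    have h4 := congrFun (congrFun h3 0) k
    simp only [Matrix.mul_apply, Matrix.conjTranspose_apply, hd.1, Matrix.smul_apply,
      Matrix.one_apply, if_neg (Ne.symm hk), smul_zero, star_one, one_mul] at h4
    exact h4
  have hgsum : ∑ u, g u = 0 := by
    have hre := congrArg Complex.re hcolsum
    have him := congrArg Complex.im hcolsum
    rw [Complex.re_sum] at hre
    rw [Complex.im_sum] at him
    simp only [Complex.zero_re, Complex.zero_im] at hre him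
    have : ∑ u, g u = (∑ u, (h u).re) + ∑ u, (h u).im := by
      rw [← Finset.sum_add_distrib]
    rw [this, hre, him, add_zero]
  -- |S| = n / 2
  have hScard : 2 * (Finset.univ.filter (fun u => side u)).card = n := by
    have hsplit := (Finset.sum_filter_add_sum_filter_not (Finset.univ : Finset (Fin n))
      (fun u => side u) g).symm
    have h1 : ∑ u ∈ Finset.univ.filter (fun u => side u), g u
        = ((Finset.univ.filter (fun u => side u)).card : ℝ) := by
      rw [Finset.sum_congr rfl (fun v hv_ => ?_), Finset.sum_const, nsmul_eq_mul, mul_one]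
      rcases hcase v with ⟨_, hv2⟩ | ⟨sv, _⟩
      · exact hv2
      · exact absurd (Finset.mem_filter.mp hv_).2 sv
    have h2 : ∑ u ∈ Finset.univ.filter (fun u => ¬ side u), g u
        = -(((Finset.univ.filter (fun u => ¬ side u)).card : ℝ)) := by
      rw [Finset.sum_congr rfl (fun v hv_ => ?_), Finset.sum_const, nsmul_eq_mul, mul_neg_one]
      rcases hcase v with ⟨sv, _⟩ | ⟨_, hv2⟩
      · exact absurd sv (Finset.mem_filter.mp hv_).2
      · exact hv2
    have hcards2 : (Finset.univ.filter (fun u => side u)).card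
        + (Finset.univ.filter (fun u => ¬ side u)).card = n := by
      rw [Finset.card_filter_add_card_filter_not, Finset.card_univ, Fintype.card_fin]
    rw [hsplit, h1, h2] at hgsum
    have : ((Finset.univ.filter (fun u => side u)).card : ℝ) * 2 = (n : ℝ) := by
      have hc2 : ((Finset.univ.filter (fun u => side u)).card : ℝ)
          + ((Finset.univ.filter (fun u => ¬ side u)).card : ℝ) = (n : ℝ) := by
        exact_mod_cast hcards2
      linarith
    have hfin2 : ((2 * (Finset.univ.filter (fun u => side u)).card : ℕ) : ℝ) = (n : ℝ) := by
      push_cast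
      linarith
    exact_mod_cast hfin2
  -- assemble the conclusion
  have hcm : ∀ u, cfun u = cfun 0 := by
    intro u
    have h1 := (hrc u).symm.trans (hrc 0)
    have h2 : ((cfun u : ℝ)) = ((cfun 0 : ℝ)) := by linarith
    exact_mod_cast h2
  refine ⟨cfun 0, ?_, ?_, ?_, ?_⟩
  · rw [hlamreal, hrc 0]
    push_cast
    ring
  · have := hcards 0
    omega
  · have hSeq : (Finset.univ.filter (fun u => H u k = 1 ∨ H u k = Complex.I))
        = (Finset.univ.filter (fun u => side u)) := by
      ext w
      simp [hsdef]
    rw [hSeq]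
    omega
  · intro u
    have hmem : ∀ w : Fin n, (w ∈ Finset.univ.filter (fun x => side x)) ↔ side w := by
      intro w; simp
    constructor
    · have hset : Finset.univ.filter (fun v => G.Adj u v ∧
          ¬ ((v ∈ Finset.univ.filter (fun x => side x)) ↔
             (u ∈ Finset.univ.filter (fun x => side x))))
          = (G.neighborFinset u).filter (fun v => ¬(side v ↔ side u)) := by
        ext v
        simp only [Finset.mem_filter, Finset.mem_univ, true_and,
          SimpleGraph.mem_neighborFinset, hmem]
      rw [hset]
      exact hcm u
    · have hset : Finset.univ.filter (fun v => G.Adj u v ∧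
          ((v ∈ Finset.univ.filter (fun x => side x)) ↔
           (u ∈ Finset.univ.filter (fun x => side x))))
          = (G.neighborFinset u).filter (fun v => (side v ↔ side u)) := by
        ext v
        simp only [Finset.mem_filter, Finset.mem_univ, true_and,
          SimpleGraph.mem_neighborFinset, hmem]
      rw [hset]
      have := hcards u
      have := hcm u
      omega
end

section
/- If the Laplacian of an unweighted graph G is diagonalised by a (real) normalised Hadamard matrix or by a dephased Turyn Hadamard matrix (all entries in {±1, ±i}), then every eigenvalue of L(G) is an even integer. -/
open Matrix Complex

/-- If the Laplacian of an unweighted graph is diagonalised by a dephased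
complex Hadamard matrix all of whose entries lie in `{±1, ±i}` (covering both
normalised real Hadamard and dephased Turyn Hadamard matrices), then every
eigenvalue of the Laplacian is an even integer. -/
theorem stmt10 {n : ℕ} [NeZero n] (G : SimpleGraph (Fin n)) [DecidableRel G.Adj]
    (H : Matrix (Fin n) (Fin n) ℂ) (hH : IsCHadamard H) (hd : IsDephased H)
    (hvals : ∀ i j, H i j = 1 ∨ H i j = -1 ∨ H i j = Complex.I ∨ H i j = -Complex.I)
    (hdiag : DiagBy (G.lapMatrix ℂ) H) :
    ∀ μ : ℂ, (∃ v : Fin n → ℂ, v ≠ 0 ∧ (G.lapMatrix ℂ).mulVec v = μ • v) →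
      ∃ m : ℤ, μ = 2 * m := by
  obtain ⟨hu, hHH⟩ := hH
  set N : ℂ := (Fintype.card (Fin n) : ℂ) with hN
  have hn0 : N ≠ 0 := by
    simp only [hN, Fintype.card_fin, Nat.cast_ne_zero]
    exact NeZero.ne n
  have hB : H * (N⁻¹ • Hᴴ) = 1 := by
    rw [Matrix.mul_smul, hHH, smul_smul, inv_mul_cancel₀ hn0, one_smul]
  have hBH : (N⁻¹ • Hᴴ) * H = 1 := by rwa [mul_eq_one_comm] at hB
  choose μf hμf using hdiag
  have lap_apply : ∀ i k, G.lapMatrix ℂ i k =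
      (if i = k then (G.degree i : ℂ) else 0) - (if G.Adj i k then 1 else 0) := by
    intro i k
    simp [SimpleGraph.lapMatrix, SimpleGraph.degMatrix, Matrix.diagonal_apply, Matrix.sub_apply]
  have lap_real : ∀ i k, (starRingEnd ℂ) (G.lapMatrix ℂ i k) = G.lapMatrix ℂ i k := by
    intro i k
    rw [lap_apply]
    simp [apply_ite (starRingEnd ℂ)]
  have lap_symm : ∀ i k, G.lapMatrix ℂ i k = G.lapMatrix ℂ k i := by
    intro i k
    rw [lap_apply, lap_apply]
    by_cases h : i = k
    · subst h; simp
    · simp [h, Ne.symm h, G.adj_comm i k]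
  have key : ∀ j, ∃ m : ℤ, μf j = 2 * m := by
    intro j
    set h : Fin n → ℂ := fun i => H i j with hh
    have heig := hμf j
    -- reality
    have hnorm : ∀ i, (starRingEnd ℂ) (h i) * h i = 1 := by
      intro i
      rw [mul_comm, Complex.mul_conj]
      norm_cast
      rw [← Complex.sq_norm, hu i j, one_pow]
    have sumconj : ∑ i, (starRingEnd ℂ) (h i) * h i = N := by
      simp [hnorm, hN]
    have e1 : ∑ i, (starRingEnd ℂ) (h i) * ((G.lapMatrix ℂ *ᵥ h) i) = μf j * N := by
      rw [heig]
      calc ∑ i, (starRingEnd ℂ) (h i) * ((μf j • h) i)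
          = μf j * ∑ i, (starRingEnd ℂ) (h i) * h i := by
            rw [Finset.mul_sum]
            refine Finset.sum_congr rfl fun i _ => ?_
            simp [Pi.smul_apply, smul_eq_mul]; ring
        _ = μf j * N := by rw [sumconj]
    have e2 : (starRingEnd ℂ) (∑ i, (starRingEnd ℂ) (h i) * ((G.lapMatrix ℂ *ᵥ h) i))
        = ∑ i, (starRingEnd ℂ) (h i) * ((G.lapMatrix ℂ *ᵥ h) i) := by
      simp only [Matrix.mulVec, dotProduct, Finset.mul_sum, map_sum]
      rw [Finset.sum_comm]
      refine Finset.sum_congr rfl fun k _ => Finset.sum_congr rfl fun i _ => ?_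
      rw [_root_.map_mul, _root_.map_mul, Complex.conj_conj, lap_real, lap_symm i k]
      ring
    have hconj : (starRingEnd ℂ) (μf j) = μf j := by
      have hNc : (starRingEnd ℂ) N = N := by simp [hN]
      rw [e1, _root_.map_mul, hNc] at e2
      exact mul_right_cancel₀ hn0 e2
    have him : (μf j).im = 0 := Complex.conj_eq_iff_im.mp hconj
    -- value formula
    have hsum : μf j = ∑ u ∈ G.neighborFinset 0, (1 - H u j) := by
      have h1 := congrFun heig 0
      rw [SimpleGraph.lapMatrix_mulVec_apply] at h1
      have h0 : H 0 j = 1 := hd.2 j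
      simp only [Pi.smul_apply, h0, smul_eq_mul, mul_one] at h1
      rw [← h1, Finset.sum_sub_distrib, Finset.sum_const,
        SimpleGraph.card_neighborFinset_eq_degree]
      simp
    have per : ∀ u, ∃ m : ℤ, (1 - H u j).re + (1 - H u j).im = 2 * (m : ℝ) := by
      intro u
      rcases hvals u j with h1 | h1 | h1 | h1 <;> rw [h1]
      · exact ⟨0, by norm_num⟩
      · exact ⟨1, by norm_num⟩
      · exact ⟨0, by simp [Complex.sub_re, Complex.sub_im]⟩
      · exact ⟨1, by simp [Complex.sub_re, Complex.sub_im]; norm_num⟩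
    choose mfun hmfun using per
    refine ⟨∑ u ∈ G.neighborFinset 0, mfun u, ?_⟩
    have hre : (μf j).re = ∑ u ∈ G.neighborFinset 0, ((1 - H u j).re + (1 - H u j).im) := by
      have h1 : (μf j).re = ∑ u ∈ G.neighborFinset 0, (1 - H u j).re := by
        rw [hsum]; exact Complex.re_sum _ _
      have h2 : (0 : ℝ) = ∑ u ∈ G.neighborFinset 0, (1 - H u j).im := by
        rw [← him, hsum]; exact Complex.im_sum _ _
      rw [Finset.sum_add_distrib, ← h1, ← h2, add_zero]
    have hre2 : (μf j).re = 2 * ((∑ u ∈ G.neighborFinset 0, mfun u : ℤ) : ℝ) := by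
      rw [hre]
      rw [Finset.sum_congr rfl fun u _ => hmfun u]
      push_cast
      rw [Finset.mul_sum]
    have hfin : μf j = ((μf j).re : ℂ) := by
      rw [← Complex.re_add_im (μf j), him]; simp
    rw [hfin, hre2]
    push_cast
    ring
  -- reduction
  rintro μ ⟨v, hv0, hv⟩
  set c : Fin n → ℂ := (N⁻¹ • Hᴴ) *ᵥ v with hc
  have hvc : H *ᵥ c = v := by
    rw [hc, Matrix.mulVec_mulVec, hB, Matrix.one_mulVec]
  have hcne : c ≠ 0 := by
    intro h0
    exact hv0 (by rw [← hvc, h0, Matrix.mulVec_zero])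
  have hLH : ∀ i jj, (G.lapMatrix ℂ * H) i jj = μf jj * H i jj := by
    intro i jj
    have h1 := congrFun (hμf jj) i
    simpa [Matrix.mul_apply, Matrix.mulVec, dotProduct] using h1
  set w : Fin n → ℂ := fun jj => c jj * (μf jj - μ) with hwdef
  have hw : H *ᵥ w = 0 := by
    funext i
    have h1 := congrFun hv i
    rw [← hvc, Matrix.mulVec_mulVec] at h1
    simp only [Matrix.mulVec, dotProduct, Pi.smul_apply, smul_eq_mul] at h1 ⊢
    rw [Finset.sum_congr rfl fun jj _ => by rw [hLH i jj]] at h1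
    have : ∑ jj, H i jj * w jj
        = ∑ jj, μf jj * H i jj * c jj - μ * ∑ jj, H i jj * c jj := by
      rw [Finset.mul_sum, ← Finset.sum_sub_distrib]
      refine Finset.sum_congr rfl fun jj _ => ?_
      rw [hwdef]; ring
    rw [this, ← h1, Pi.zero_apply, sub_eq_zero]
  have hw0 : w = 0 := by
    have h2 := congrArg (fun x => (N⁻¹ • Hᴴ) *ᵥ x) hw
    simpa [Matrix.mulVec_mulVec, hBH, Matrix.one_mulVec, Matrix.mulVec_zero] using h2
  obtain ⟨j0, hj0⟩ : ∃ j0, c j0 ≠ 0 := by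
    by_contra hcon
    push_neg at hcon
    exact hcne (funext hcon)
  have hμeq : μ = μf j0 := by
    have := congrFun hw0 j0
    simp only [hwdef, Pi.zero_apply] at this
    rcases mul_eq_zero.mp this with h' | h'
    · exact absurd h' hj0
    · exact (sub_eq_zero.mp h').symm
  obtain ⟨m, hm⟩ := key j0
  exact ⟨m, hμeq ▸ hm⟩
end

section
/- Let k be a positive integer and G1,…,G_{2k+1} be unweighted connected graphs, each of order n. Then the Laplacian of the disjoint union G = G1 + ⋯ + G_{2k+1} is not diagonalisable by any Turyn Hadamard matrix (and not by any real Hadamard matrix). -/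
open Matrix Complex

open SimpleGraph in
lemma root_conj_mul {a b : ℂ}
    (ha : a = 1 ∨ a = -1 ∨ a = Complex.I ∨ a = -Complex.I)
    (hb : b = 1 ∨ b = -1 ∨ b = Complex.I ∨ b = -Complex.I) :
    (starRingEnd ℂ) a * b = 1 ∨ (starRingEnd ℂ) a * b = -1 ∨
      (starRingEnd ℂ) a * b = Complex.I ∨ (starRingEnd ℂ) a * b = -Complex.I := by
  rcases ha with rfl|rfl|rfl|rfl <;> rcases hb with rfl|rfl|rfl|rfl <;>
    simp [Complex.ext_iff]

lemma sum_roots_even {m : ℕ} (t : Fin m → ℂ)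
    (ht : ∀ i, t i = 1 ∨ t i = -1 ∨ t i = Complex.I ∨ t i = -Complex.I)
    (hsum : ∑ i, t i = 0) : Even m := by
  have h : ∀ i, ∃ r s : ℤ, t i = (r : ℂ) + (s : ℂ) * Complex.I ∧ r ^ 2 + s ^ 2 = 1 := by
    intro i
    rcases ht i with h|h|h|h
    · exact ⟨1, 0, by simp [h], by ring⟩
    · exact ⟨-1, 0, by simp [h], by ring⟩
    · exact ⟨0, 1, by simp [h], by ring⟩
    · exact ⟨0, -1, by simp [h], by ring⟩
  choose r s hrs hsq using h
  have key : ((∑ i, r i : ℤ) : ℂ) + ((∑ i, s i : ℤ) : ℂ) * Complex.I = 0 := by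
    rw [← hsum]
    push_cast
    rw [Finset.sum_mul, ← Finset.sum_add_distrib]
    exact Finset.sum_congr rfl fun i _ => (hrs i).symm
  have hr0 : (∑ i, r i) = 0 := by
    have := congrArg Complex.re key
    simp at this
    exact_mod_cast this
  have hs0 : (∑ i, s i) = 0 := by
    have := congrArg Complex.im key
    simp at this
    exact_mod_cast this
  have h1 : Even (∑ i, (r i ^ 2 - r i)) :=
    Finset.even_sum _ fun i _ => by
      have : r i ^ 2 - r i = (r i - 1) * ((r i - 1) + 1) := by ring
      rw [this]; exact Int.even_mul_succ_self _
  have h2 : Even (∑ i, (s i ^ 2 - s i)) :=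
    Finset.even_sum _ fun i _ => by
      have : s i ^ 2 - s i = (s i - 1) * ((s i - 1) + 1) := by ring
      rw [this]; exact Int.even_mul_succ_self _
  have hm : (m : ℤ) = ∑ i, (r i ^ 2 + s i ^ 2) := by
    rw [Finset.sum_congr rfl fun i _ => hsq i]
    simp
  have : Even (m : ℤ) := by
    rw [hm]
    have : (∑ i, (r i ^ 2 + s i ^ 2))
        = (∑ i, (r i ^ 2 - r i)) + (∑ i, (s i ^ 2 - s i)) + (∑ i, r i) + (∑ i, s i) := by
      rw [← Finset.sum_add_distrib, ← Finset.sum_add_distrib, ← Finset.sum_add_distrib]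
      exact Finset.sum_congr rfl fun i _ => by ring
    rw [this, hr0, hs0, add_zero, add_zero]
    exact h1.add h2
  exact_mod_cast this

open SimpleGraph in
lemma lapC_kernel {V : Type*} [Fintype V] [DecidableEq V] (G : SimpleGraph V)
    [DecidableRel G.Adj] (x : V → ℂ) :
    G.lapMatrix ℂ *ᵥ x = 0 ↔ ∀ i j, G.Reachable i j → x i = x j := by
  have hmap : ∀ v u, G.lapMatrix ℂ v u = ((G.lapMatrix ℝ v u : ℝ) : ℂ) := by
    intro v u
    simp only [lapMatrix, Matrix.sub_apply, degMatrix, Matrix.diagonal_apply, adjMatrix_apply]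
    split_ifs <;> simp
  have hdec : ∀ v, (G.lapMatrix ℂ *ᵥ x) v
      = (((G.lapMatrix ℝ *ᵥ fun u => (x u).re) v : ℝ) : ℂ)
        + (((G.lapMatrix ℝ *ᵥ fun u => (x u).im) v : ℝ) : ℂ) * Complex.I := by
    intro v
    simp only [mulVec, dotProduct, hmap]
    push_cast
    rw [Finset.sum_mul, ← Finset.sum_add_distrib]
    refine Finset.sum_congr rfl fun u _ => ?_
    rw [mul_assoc, ← mul_add, Complex.re_add_im]
  have hre := G.lapMatrix_mulVec_eq_zero_iff_forall_reachable (x := fun u => (x u).re)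
  have him := G.lapMatrix_mulVec_eq_zero_iff_forall_reachable (x := fun u => (x u).im)
  constructor
  · intro h i j hij
    have h1 : G.lapMatrix ℝ *ᵥ (fun u => (x u).re) = 0 ∧
        G.lapMatrix ℝ *ᵥ (fun u => (x u).im) = 0 := by
      constructor <;> funext v <;>
      · have := (hdec v).symm.trans (congrFun h v)
        rw [Complex.ext_iff] at this
        simp at this
        simp [this]
    exact Complex.ext (hre.mp h1.1 i j hij) (him.mp h1.2 i j hij)
  · intro h
    funext v
    rw [hdec v, hre.mpr (fun i j hij => by rw [h i j hij]),
        him.mpr (fun i j hij => by rw [h i j hij])]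
    simp

/-- The disjoint union of an odd number `2k+1` of connected graphs of common
order `n` is not diagonalisable by any Turyn Hadamard matrix (in particular,
not by any real Hadamard matrix): no complex Hadamard matrix with entries in
`{±1, ±i}` diagonalises its Laplacian. -/
theorem stmt11 {k n : ℕ} (hk : 1 ≤ k)
    (G : Fin (2 * k + 1) → SimpleGraph (Fin n))
    (hconn : ∀ i, (G i).Connected)
    (Gbig : SimpleGraph (Fin (2 * k + 1) × Fin n)) [DecidableRel Gbig.Adj]
    (hbig : ∀ p q : Fin (2 * k + 1) × Fin n,
      Gbig.Adj p q ↔ p.1 = q.1 ∧ (G p.1).Adj p.2 q.2) :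
    ¬ ∃ H : Matrix (Fin (2 * k + 1) × Fin n) (Fin (2 * k + 1) × Fin n) ℂ,
        (∀ i j, H i j = 1 ∨ H i j = -1 ∨ H i j = Complex.I ∨ H i j = -Complex.I) ∧
        IsCHadamard H ∧ DiagBy (Gbig.lapMatrix ℂ) H := by
  rintro ⟨H, hent, ⟨habs, hHH⟩, hdiag⟩
  have hn : 0 < n := by
    have h0 : (0 : ℕ) < 2 * k + 1 := by omega
    have := (hconn ⟨0, h0⟩).nonempty
    exact Fin.pos_iff_nonempty.mpr this
  have x0 : Fin n := ⟨0, hn⟩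
  set N : ℂ := (Fintype.card (Fin (2 * k + 1) × Fin n) : ℂ) with hNdef
  have hNne : N ≠ 0 := by
    simp only [hNdef, Fintype.card_prod, Fintype.card_fin]
    have h : (2 * k + 1) * n ≠ 0 := by positivity
    exact_mod_cast h
  set K : Matrix (Fin (2 * k + 1) × Fin n) (Fin (2 * k + 1) × Fin n) ℂ := N⁻¹ • Hᴴ with hKdef
  have hHK : H * K = 1 := by
    rw [hKdef, Matrix.mul_smul, hHH, smul_smul, inv_mul_cancel₀ hNne, one_smul]
  have hKH : K * H = 1 := mul_eq_one_comm.mp hHK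
  choose μ hμ using hdiag
  have hLH : Gbig.lapMatrix ℂ * H = H * Matrix.diagonal μ := by
    ext p j
    rw [Matrix.mul_diagonal]
    have h := congrFun (hμ j) p
    simp only [mulVec, dotProduct, Pi.smul_apply, smul_eq_mul] at h
    rw [Matrix.mul_apply, h, mul_comm]
  have samecomp : ∀ p q, Gbig.Reachable p q → p.1 = q.1 := by
    intro p q h
    rcases h with ⟨w⟩
    induction w with
    | nil => rfl
    | cons h w ih => exact ((hbig _ _).1 h).1.trans ih
  have reach : ∀ (i : Fin (2 * k + 1)) (x y : Fin n), Gbig.Reachable (i, x) (i, y) := by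
    intro i x y
    exact SimpleGraph.Reachable.map
      ⟨fun z => (i, z), fun {a b} h => (hbig (i, a) (i, b)).2 ⟨rfl, h⟩⟩
      ((hconn i).preconnected x y)
  have h0lt : (0 : ℕ) < 2 * k + 1 := by omega
  have h1lt : (1 : ℕ) < 2 * k + 1 := by omega
  set i0 : Fin (2 * k + 1) := ⟨0, h0lt⟩ with hi0def
  set i1 : Fin (2 * k + 1) := ⟨1, h1lt⟩ with hi1def
  have hi01 : i0 ≠ i1 := Fin.ne_of_val_ne (by simp [hi0def, hi1def])
  -- two distinct zero-eigenvalue columns exist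
  have htwo : ∃ j1 j2, j1 ≠ j2 ∧ μ j1 = 0 ∧ μ j2 = 0 := by
    by_contra hone
    have huniq : ∀ j j', μ j = 0 → μ j' = 0 → j = j' := by
      intro j j' h h'
      by_contra hne
      exact hone ⟨j, j', hne, h, h'⟩
    set χ : Fin (2 * k + 1) → (Fin (2 * k + 1) × Fin n) → ℂ :=
      fun i p => if p.1 = i then 1 else 0 with hχdef
    have hχker : ∀ i, Gbig.lapMatrix ℂ *ᵥ χ i = 0 := by
      intro i
      rw [lapC_kernel]
      intro p q hpq
      simp only [hχdef, samecomp p q hpq]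
    have hsupp : ∀ i j, μ j ≠ 0 → (K *ᵥ χ i) j = 0 := by
      intro i j hμj
      have cancel : ∀ v, K *ᵥ (H *ᵥ v) = v := fun v => by
        rw [Matrix.mulVec_mulVec, hKH, Matrix.one_mulVec]
      have h1 : H *ᵥ (Matrix.diagonal μ *ᵥ (K *ᵥ χ i)) = 0 := by
        rw [Matrix.mulVec_mulVec, Matrix.mulVec_mulVec, ← hLH, Matrix.mul_assoc, hHK,
          Matrix.mul_one]
        exact hχker i
      have h2 : Matrix.diagonal μ *ᵥ (K *ᵥ χ i) = 0 := by
        rw [← cancel (Matrix.diagonal μ *ᵥ (K *ᵥ χ i)), h1, Matrix.mulVec_zero]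
      have h4 := congrFun h2 j
      simp only [Matrix.mulVec_diagonal, Pi.zero_apply] at h4
      exact (mul_eq_zero.mp h4).resolve_left hμj
    have hrecon : ∀ i, H *ᵥ (K *ᵥ χ i) = χ i := by
      intro i
      rw [Matrix.mulVec_mulVec, hHK, Matrix.one_mulVec]
    by_cases hz : ∃ j0, μ j0 = 0
    · obtain ⟨j0, hj0⟩ := hz
      have hval : ∀ i p, χ i p = H p j0 * (K *ᵥ χ i) j0 := by
        intro i p
        conv_lhs => rw [← hrecon i]
        show (∑ j, H p j * (K *ᵥ χ i) j) = _
        refine Finset.sum_eq_single j0 (fun j _ hj => ?_) (by simp)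
        rw [hsupp i j (fun h => hj (huniq j j0 h hj0)), mul_zero]
      have hH0 : H (i0, x0) j0 ≠ 0 := by
        intro h
        have := habs (i0, x0) j0
        rw [h] at this
        simp at this
      have hb0 : (K *ᵥ χ i1) j0 = 0 := by
        have h5 := hval i1 (i0, x0)
        simp only [hχdef] at h5
        rw [if_neg hi01] at h5
        exact (mul_eq_zero.mp h5.symm).resolve_left hH0
      have h6 := hval i1 (i1, x0)
      rw [hb0, mul_zero] at h6
      simp only [hχdef, if_pos rfl] at h6
      exact one_ne_zero h6
    · push_neg at hz
      have hval : χ i0 = 0 := by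
        rw [← hrecon i0]
        funext p
        show (∑ j, H p j * (K *ᵥ χ i0) j) = 0
        exact Finset.sum_eq_zero fun j _ => by rw [hsupp i0 j (hz j), mul_zero]
      have h7 := congrFun hval (i0, x0)
      simp [hχdef] at h7
  -- the contradiction
  obtain ⟨j1, j2, hj12, hz1, hz2⟩ := htwo
  have hker : ∀ j, μ j = 0 → ∀ i x, H (i, x) j = H (i, x0) j := by
    intro j hz i x
    have h := hμ j
    rw [hz, zero_smul] at h
    exact (lapC_kernel Gbig _).mp h (i, x) (i, x0) (reach i x x0)
  set t : Fin (2 * k + 1) → ℂ :=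
    fun i => (starRingEnd ℂ) (H (i, x0) j1) * H (i, x0) j2 with htdef
  have horth : ∑ p : Fin (2 * k + 1) × Fin n, (starRingEnd ℂ) (H p j1) * H p j2 = 0 := by
    have h := congrFun (congrFun hKH j1) j2
    rw [Matrix.one_apply_ne hj12] at h
    simp only [hKdef, Matrix.mul_apply, Matrix.smul_apply, Matrix.conjTranspose_apply,
      smul_eq_mul] at h
    have h' : N⁻¹ * ∑ p : Fin (2 * k + 1) × Fin n,
        (starRingEnd ℂ) (H p j1) * H p j2 = 0 := by
      rw [Finset.mul_sum, ← h]
      exact Finset.sum_congr rfl fun p _ => by rw [← mul_assoc]; rfl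
    exact (mul_eq_zero.mp h').resolve_left (inv_ne_zero hNne)
  have hsum : ∑ i, t i = 0 := by
    rw [Fintype.sum_prod_type] at horth
    have : ∀ i : Fin (2 * k + 1),
        (∑ x : Fin n, (starRingEnd ℂ) (H (i, x) j1) * H (i, x) j2) = (n : ℂ) * t i := by
      intro i
      rw [Finset.sum_congr rfl fun x _ => by
        rw [hker j1 hz1 i x, hker j2 hz2 i x]]
      simp [htdef, Finset.sum_const, Finset.card_univ, mul_comm]
    rw [Finset.sum_congr rfl fun i _ => this i, ← Finset.mul_sum] at horth
    have hnne : (n : ℂ) ≠ 0 := Nat.cast_ne_zero.mpr hn.ne'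
    exact (mul_eq_zero.mp horth).resolve_left hnne
  have heven := sum_roots_even t (fun i => root_conj_mul (hent _ j1) (hent _ j2)) hsum
  obtain ⟨m, hm⟩ := heven
  omega
end

section
/- Let G be an integer-weighted graph whose Laplacian L(G) is diagonalised by a Butson Hadamard matrix in H(2^m, n) for some positive integer m. Then every integer eigenvalue of L(G) is even. -/
open Matrix Complex

/-- The Laplacian of an integer-weighted graph. -/
def lapOfInt {n : ℕ} (A : Matrix (Fin n) (Fin n) ℤ) : Matrix (Fin n) (Fin n) ℤ :=
  Matrix.diagonal (fun i => ∑ j, A i j) - A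

private lemma key_lemma {m : ℕ} (hm : 1 ≤ m) {ι : Type*} [Fintype ι] (L : ι → ℤ)
    (hsum : ∑ k, L k = 0) (w : ι → ℂ) (hw : ∀ k, w k ^ (2 ^ m) = 1)
    (lam : ℤ) (hlam : (lam : ℂ) = ∑ k, (L k : ℂ) * w k) : Even lam := by
  set d := 2 ^ m with hd
  set h := 2 ^ (m - 1) with hh
  have hdh : d = h + h := by
    rw [hd, hh, ← two_mul, ← pow_succ']
    congr 1; omega
  have hh0 : 0 < h := by positivity
  have hd0 : d ≠ 0 := by positivity
  haveI : NeZero d := ⟨hd0⟩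
  set ζ : ℂ := Complex.exp (2 * Real.pi * Complex.I / d) with hζdef
  have hζ : IsPrimitiveRoot ζ d := Complex.isPrimitiveRoot_exp d hd0
  choose e he hew using fun k => hζ.eq_pow_of_pow_eq_one (hw k)
  set a : ℕ → ℤ := fun j => ∑ k, if e k = j then L k else 0 with ha
  have hsuma : ∑ j ∈ Finset.range d, a j = 0 := by
    rw [ha, Finset.sum_comm]
    simp [Finset.sum_ite_eq, Finset.mem_range, he, hsum]
  have hca : (lam : ℂ) = ∑ j ∈ Finset.range d, (a j : ℂ) * ζ ^ j := by
    have : ∀ j, (a j : ℂ) * ζ ^ j = ∑ k, if e k = j then (L k : ℂ) * ζ ^ j else 0 := by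
      intro j
      rw [ha]
      push_cast
      rw [Finset.sum_mul]
      congr with k
      split <;> simp
    rw [hlam]
    simp_rw [this]
    rw [Finset.sum_comm]
    congr with k
    rw [Finset.sum_ite_eq (Finset.range d) (e k)]
    simp [Finset.mem_range.mpr (he k), hew]
  have hζh : ζ ^ h = -1 := by
    have h1 : ζ ^ h * ζ ^ h = 1 := by rw [← pow_add, ← hdh]; exact hζ.pow_eq_one
    rcases mul_self_eq_one_iff.mp h1 with h2 | h2
    · exact absurd h2 (hζ.pow_ne_one_of_pos_of_lt hh0.ne' (by omega))
    · exact h2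
  have hfold : (lam : ℂ) = ∑ j ∈ Finset.range h, ((a j : ℂ) - (a (h + j) : ℂ)) * ζ ^ j := by
    rw [hca]
    have hsplit := Finset.sum_range_add_sum_Ico (fun j => (a j : ℂ) * ζ ^ j)
      (show h ≤ d by omega)
    rw [← hsplit, Finset.sum_Ico_eq_sum_range]
    have : d - h = h := by omega
    rw [this]
    have : ∀ j, (a (h + j) : ℂ) * ζ ^ (h + j) = -((a (h + j) : ℂ) * ζ ^ j) := by
      intro j; rw [pow_add, hζh]; ring
    simp_rw [this]
    rw [← Finset.sum_add_distrib]
    exact Finset.sum_congr rfl fun j _ => by ring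
  -- linear independence part
  have hirr := Polynomial.cyclotomic.irreducible_rat (n := d) (by positivity)
  haveI : NeZero ((d : ℚ)) := ⟨Nat.cast_ne_zero.mpr hd0⟩
  have hmin : Polynomial.cyclotomic d ℚ = minpoly ℚ ζ :=
    hζ.minpoly_eq_cyclotomic_of_irreducible hirr
  have hdeg : (minpoly ℚ ζ).natDegree = h := by
    rw [← hmin, Polynomial.natDegree_cyclotomic, hd,
      Nat.totient_prime_pow Nat.prime_two hm]
    simp [hh]
  have hli := linearIndependent_pow (K := ℚ) (S := ℂ) ζ
  rw [hdeg] at hli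
  haveI : NeZero h := ⟨hh0.ne'⟩
  set g : Fin h → ℚ := fun j =>
    ((a (j : ℕ) : ℚ) - (a (h + (j : ℕ)) : ℚ)) - (if j = 0 then (lam : ℚ) else 0) with hg
  have hgz : ∑ j : Fin h, g j • ζ ^ (j : ℕ) = 0 := by
    have e1 : ∑ j : Fin h, (((a (j : ℕ) : ℚ) - (a (h + (j : ℕ)) : ℚ)) • ζ ^ (j : ℕ)) = (lam : ℂ) := by
      rw [hfold, ← Fin.sum_univ_eq_sum_range]
      congr with j
      rw [Rat.smul_def]
      push_cast
      ring
    have e2 : ∑ j : Fin h, ((if j = 0 then (lam : ℚ) else 0) • ζ ^ (j : ℕ)) = (lam : ℂ) := by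
      simp only [ite_smul, zero_smul]
      rw [Finset.sum_ite_eq' Finset.univ (0 : Fin h)
        (fun j => (lam : ℚ) • ζ ^ (j : ℕ))]
      simp [Rat.smul_def]
    have hdistr : ∀ j : Fin h, g j • ζ ^ (j : ℕ) =
        ((a (j : ℕ) : ℚ) - (a (h + (j : ℕ)) : ℚ)) • ζ ^ (j : ℕ) -
          (if j = 0 then (lam : ℚ) else 0) • ζ ^ (j : ℕ) := fun j => by
      rw [hg, sub_smul]
    simp_rw [hdistr]
    rw [Finset.sum_sub_distrib, e1, e2, sub_self]
  have hgzero := Fintype.linearIndependent_iff.mp hli g hgz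
  have h0 : lam = a 0 - a (h + 0) := by
    have := hgzero 0
    rw [hg] at this
    simp only [if_pos rfl] at this
    have : ((a ((0 : Fin h) : ℕ) : ℚ) - (a (h + ((0 : Fin h) : ℕ)) : ℚ)) = (lam : ℚ) :=
      sub_eq_zero.mp this
    rw [Fin.val_zero] at this
    exact_mod_cast this.symm
  have hj : ∀ j : ℕ, j ≠ 0 → j < h → a j = a (h + j) := by
    intro j hj0 hjh
    have := hgzero ⟨j, hjh⟩
    simp only [hg] at this
    have hne : (⟨j, hjh⟩ : Fin h) ≠ 0 := by
      simp [Fin.ext_iff, hj0]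
    rw [if_neg hne, sub_zero] at this
    have := sub_eq_zero.mp this
    exact_mod_cast this
  -- parity
  have hsplit : ∑ j ∈ Finset.range h, (a j + a (h + j)) = 0 := by
    rw [Finset.sum_add_distrib]
    have hs := Finset.sum_range_add_sum_Ico a (show h ≤ d by omega)
    rw [Finset.sum_Ico_eq_sum_range] at hs
    have hdd : d - h = h := by omega
    rw [hdd] at hs
    rw [hs, hsuma]
  have h0mem : 0 ∈ Finset.range h := Finset.mem_range.mpr hh0
  rw [← Finset.add_sum_erase _ _ h0mem] at hsplit
  have h2S : ∑ j ∈ (Finset.range h).erase 0, (a j + a (h + j)) =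
      2 * ∑ j ∈ (Finset.range h).erase 0, a j := by
    rw [Finset.mul_sum]
    refine Finset.sum_congr rfl fun j hjmem => ?_
    have hj0 : j ≠ 0 := (Finset.mem_erase.mp hjmem).1
    have hjh : j < h := Finset.mem_range.mp (Finset.mem_erase.mp hjmem).2
    rw [← hj j hj0 hjh]; ring
  rw [h2S] at hsplit
  refine ⟨- ∑ j ∈ (Finset.range h).erase 0, a j - a (h + 0), ?_⟩
  omega

/-- If the Laplacian of an integer-weighted graph is diagonalised by a Butson
Hadamard matrix in `H(2^m, n)`, then every integer eigenvalue of the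
Laplacian is even. -/
theorem stmt14 {n m : ℕ} (hm : 1 ≤ m) (A : Matrix (Fin n) (Fin n) ℤ)
    (hsymm : A.IsSymm) (hdiag : ∀ i, A i i = 0)
    (H : Matrix (Fin n) (Fin n) ℂ) (hH : IsCHadamard H)
    (hroot : ∀ i j, (H i j) ^ (2 ^ m) = 1)
    (hdiagby : DiagBy ((lapOfInt A).map (Int.cast : ℤ → ℂ)) H) :
    ∀ lam : ℤ, (∃ v : Fin n → ℂ, v ≠ 0 ∧
        ((lapOfInt A).map (Int.cast : ℤ → ℂ)).mulVec v = (lam : ℂ) • v) →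
      Even lam := by
  rintro lam ⟨v, hv0, hveq⟩
  set L := (lapOfInt A).map (Int.cast : ℤ → ℂ) with hL
  have hn0 : 0 < n := by
    rcases Nat.eq_zero_or_pos n with h | h
    · subst h; exact absurd (Subsingleton.elim v 0) hv0
    · exact h
  have hndz : ((n : ℂ)) ≠ 0 := Nat.cast_ne_zero.mpr hn0.ne'
  have hright : H * (((n : ℂ))⁻¹ • Hᴴ) = 1 := by
    rw [Matrix.mul_smul, hH.2, Fintype.card_fin, smul_smul, inv_mul_cancel₀ hndz, one_smul]
  have hdet : IsUnit H.det := Matrix.isUnit_det_of_right_inverse hright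
  choose μ hmu using hdiagby
  have hLH : L * H = H * Matrix.diagonal μ := by
    ext i j
    have h1 := congrFun (hmu j) i
    simp only [Matrix.mulVec, dotProduct, Pi.smul_apply, smul_eq_mul] at h1
    rw [Matrix.mul_apply, Matrix.mul_diagonal]
    rw [h1]; ring
  set c := H⁻¹.mulVec v with hc
  have hHc : H.mulVec c = v := by
    rw [hc, Matrix.mulVec_mulVec, Matrix.mul_nonsing_inv _ hdet, Matrix.one_mulVec]
  have hinj : Function.Injective H.mulVec := by
    intro x y hxy
    have := congrArg H⁻¹.mulVec hxy
    simpa [Matrix.mulVec_mulVec, Matrix.nonsing_inv_mul _ hdet, Matrix.one_mulVec] using this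
  have hkey : H.mulVec (fun j => μ j * c j) = H.mulVec (fun j => (lam : ℂ) * c j) := by
    have e1 : H.mulVec (fun j => μ j * c j) = L.mulVec v := by
      have hd : (Matrix.diagonal μ).mulVec c = fun j => μ j * c j := by
        ext j; simp [Matrix.mulVec_diagonal]
      rw [← hd, Matrix.mulVec_mulVec, ← hLH, ← Matrix.mulVec_mulVec, hHc]
    have e2 : H.mulVec (fun j => (lam : ℂ) * c j) = (lam : ℂ) • v := by
      have : (fun j => (lam : ℂ) * c j) = (lam : ℂ) • c := rfl
      rw [this, Matrix.mulVec_smul, hHc]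
    rw [e1, e2, hveq]
  have heig : ∀ j, μ j * c j = (lam : ℂ) * c j := fun j => congrFun (hinj hkey) j
  have hcne : c ≠ 0 := fun h0 => hv0 (by rw [← hHc, h0, Matrix.mulVec_zero])
  obtain ⟨j, hj⟩ := Function.ne_iff.mp hcne
  have hmuj : μ j = (lam : ℂ) := mul_right_cancel₀ hj (heig j)
  have hrow := congrFun (hmu j) j
  simp only [Matrix.mulVec, dotProduct, Pi.smul_apply, smul_eq_mul, hmuj] at hrow
  have hHjj : H j j ≠ 0 := by
    intro h0
    have := hH.1 j j
    rw [h0] at this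
    simp at this
  have hsumrow : ∑ k, lapOfInt A j k = 0 := by
    simp only [lapOfInt, Matrix.sub_apply, Matrix.diagonal_apply, Finset.sum_sub_distrib]
    rw [Finset.sum_ite_eq Finset.univ j (fun _ => ∑ l, A j l)]
    simp
  refine key_lemma hm (fun k => lapOfInt A j k) hsumrow (fun k => H k j / H j j)
    (fun k => by rw [div_pow, hroot, hroot, div_one]) lam ?_
  have hdiv : ∑ k, ((lapOfInt A j k : ℂ)) * (H k j / H j j) =
      (∑ k, (lapOfInt A j k : ℂ) * H k j) / H j j := by
    rw [Finset.sum_div]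
    exact Finset.sum_congr rfl fun k _ => by ring
  rw [hdiv]
  have hLmap : ∀ i k, L i k = ((lapOfInt A i k : ℤ) : ℂ) := fun i k => rfl
  rw [show ∑ k, (lapOfInt A j k : ℂ) * H k j = (lam : ℂ) * H j j from by
    rw [← hrow]; exact Finset.sum_congr rfl fun k _ => by rw [← hLmap]]
  field_simp
end

section
/- Let G be an integer-weighted graph on n vertices whose Laplacian is diagonalised by a Butson Hadamard matrix H ∈ H(p, n) for a prime p. If λ is a non-zero integer eigenvalue of L(G), then p divides λ and λ has multiplicity at least p − 1 as an eigenvalue of L(G). -/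
open Matrix Complex

open Polynomial Finset in
lemma allEq {p : ℕ} (hp : p.Prime) {ζ : ℂ} (hζ : IsPrimitiveRoot ζ p)
    (c : ℕ → ℤ) (hsum : ∑ m ∈ Finset.range p, (c m : ℂ) * ζ ^ m = 0) :
    ∀ m < p, c m = c (p - 1) := by
  have hp2 : 2 ≤ p := hp.two_le
  set d : ℕ → ℤ := fun m => c m - c (p - 1) with hd
  have hgeom : ∑ m ∈ range p, ζ ^ m = 0 := hζ.geom_sum_eq_zero (by omega)
  have hsum2 : ∑ m ∈ range p, (d m : ℂ) * ζ ^ m = 0 := by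
    have : ∑ m ∈ range p, (d m : ℂ) * ζ ^ m
        = ∑ m ∈ range p, (c m : ℂ) * ζ ^ m - (c (p-1) : ℂ) * ∑ m ∈ range p, ζ ^ m := by
      rw [Finset.mul_sum, ← Finset.sum_sub_distrib]
      congr 1; ext m; push_cast [hd]; ring
    rw [this, hsum, hgeom, mul_zero, sub_zero]
  have hlast : d (p - 1) = 0 := by simp [hd]
  have hsum3 : ∑ m ∈ range (p - 1), (d m : ℂ) * ζ ^ m = 0 := by
    have hps : p = (p - 1) + 1 := by omega
    rw [hps, Finset.sum_range_succ] at hsum2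
    simpa [hlast, ← hps] using hsum2
  set g : ℚ[X] := ∑ m ∈ range (p - 1), C ((d m : ℚ)) * X ^ m with hg
  have haev : aeval ζ g = 0 := by
    rw [hg, map_sum]
    simpa [mul_comm] using hsum3
  have hg0 : g = 0 := by
    by_contra hne
    have hdvd : minpoly ℚ ζ ∣ g := minpoly.dvd ℚ ζ haev
    have hmindeg : (minpoly ℚ ζ).natDegree = p - 1 := by
      rw [← cyclotomic_eq_minpoly_rat hζ hp.pos, natDegree_cyclotomic, Nat.totient_prime hp]
    have hgdeg : g.natDegree ≤ p - 2 := by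
      rw [hg]
      refine natDegree_sum_le_of_forall_le _ _ (fun m hm => ?_)
      refine le_trans (natDegree_C_mul_le _ _) ?_
      rw [natDegree_X_pow]
      have := Finset.mem_range.mp hm; omega
    have := natDegree_le_of_dvd hdvd hne
    omega
  intro m hm
  rcases Nat.lt_or_ge m (p - 1) with h | h
  · have : g.coeff m = (d m : ℚ) := by
      rw [hg, finset_sum_coeff]
      rw [Finset.sum_eq_single m]
      · simp
      · intro b hb hbm
        simp [coeff_C_mul, coeff_X_pow, Ne.symm hbm]
      · intro hmm; exact absurd (Finset.mem_range.mpr h) hmm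
    rw [hg0] at this
    have h2 : (d m : ℚ) = 0 := by simpa using this.symm
    have h3 : d m = 0 := by exact_mod_cast h2
    simp only [hd] at h3
    omega
  · have : m = p - 1 := by omega
    rw [this]

lemma lap_row_sum {n : ℕ} (A : Matrix (Fin n) (Fin n) ℤ) (i : Fin n) :
    ∑ k, lapOfInt A i k = 0 := by
  simp [lapOfInt, Matrix.sub_apply, Finset.sum_sub_distrib, Matrix.diagonal_apply]

/-- If the Laplacian of an integer-weighted graph on `n` vertices is
diagonalised by a Butson Hadamard matrix in `H(p, n)` with `p` prime, then any
non-zero integer eigenvalue `λ` is divisible by `p` and has multiplicity at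
least `p − 1` (its eigenspace has dimension at least `p − 1`). -/
theorem stmt15 {n p : ℕ} (hp : p.Prime) (A : Matrix (Fin n) (Fin n) ℤ)
    (hsymm : A.IsSymm) (hdiag : ∀ i, A i i = 0)
    (H : Matrix (Fin n) (Fin n) ℂ) (hH : IsCHadamard H)
    (hroot : ∀ i j, (H i j) ^ p = 1)
    (hdiagby : DiagBy ((lapOfInt A).map (Int.cast : ℤ → ℂ)) H)
    (lam : ℤ) (hlam : lam ≠ 0)
    (heig : ∃ v : Fin n → ℂ, v ≠ 0 ∧
      ((lapOfInt A).map (Int.cast : ℤ → ℂ)).mulVec v = (lam : ℂ) • v) :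
    (p : ℤ) ∣ lam ∧
      p - 1 ≤ Module.finrank ℂ
        ↥(Module.End.eigenspace
            (Matrix.toLin' ((lapOfInt A).map (Int.cast : ℤ → ℂ))) (lam : ℂ)) := by
  classical
  obtain ⟨v, hv0, hveig⟩ := heig
  set L : Matrix (Fin n) (Fin n) ℂ := (lapOfInt A).map (Int.cast : ℤ → ℂ) with hL
  have hn : n ≠ 0 := by
    rintro rfl
    exact hv0 (funext fun i => i.elim0)
  have hiex : Nonempty (Fin n) := ⟨⟨0, Nat.pos_of_ne_zero hn⟩⟩
  -- H is invertible
  have hdetH : IsUnit H.det := by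
    have h2 := congrArg Matrix.det hH.2
    rw [Matrix.det_mul, Matrix.det_smul, Matrix.det_one, mul_one] at h2
    have hne : H.det * Hᴴ.det ≠ 0 := by
      rw [h2]
      exact pow_ne_zero _ (by simp [hn])
    exact isUnit_iff_ne_zero.mpr (left_ne_zero_of_mul hne)
  choose μ hμ using hdiagby
  set a : Fin n → ℂ := H⁻¹.mulVec v with ha
  have hva : H.mulVec a = v := by
    rw [ha, Matrix.mulVec_mulVec, Matrix.mul_nonsing_inv H hdetH, Matrix.one_mulVec]
  have hcol : ∀ i j, ∑ k, L i k * H k j = μ j * H i j := by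
    intro i j
    have := congrFun (hμ j) i
    simpa [Matrix.mulVec, dotProduct] using this
  have hvi : ∀ i, v i = ∑ j, H i j * a j := by
    intro i; rw [← hva]; simp [Matrix.mulVec, dotProduct]
  have hLv : ∀ i, (L.mulVec v) i = ∑ j, μ j * H i j * a j := by
    intro i
    simp only [Matrix.mulVec, dotProduct]
    calc ∑ k, L i k * v k = ∑ k, ∑ j, L i k * H k j * a j := by
          apply Finset.sum_congr rfl; intro k _
          rw [hvi k, Finset.mul_sum]
          apply Finset.sum_congr rfl; intro j _; ring
      _ = ∑ j, ∑ k, L i k * H k j * a j := Finset.sum_comm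
      _ = ∑ j, μ j * H i j * a j := by
          apply Finset.sum_congr rfl; intro j _
          rw [← Finset.sum_mul, hcol i j]
  have hc0 : ∀ j, a j * (μ j - (lam : ℂ)) = 0 := by
    have hHc : H.mulVec (fun j => a j * (μ j - (lam : ℂ))) = 0 := by
      funext i
      have h1 : (L.mulVec v) i = (lam : ℂ) * v i := by rw [hveig]; simp
      simp only [Matrix.mulVec, dotProduct, Pi.zero_apply]
      calc ∑ j, H i j * (a j * (μ j - (lam:ℂ)))
          = (∑ j, μ j * H i j * a j) - ∑ j, (lam:ℂ) * (H i j * a j) := by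
            rw [← Finset.sum_sub_distrib]
            apply Finset.sum_congr rfl; intro j _; ring
        _ = (L.mulVec v) i - (lam:ℂ) * v i := by
            rw [hLv i, hvi i, Finset.mul_sum]
        _ = 0 := by rw [h1]; ring
    intro j
    have hcc : (fun j => a j * (μ j - (lam:ℂ))) = 0 := by
      have h3 := congrArg (fun w => H⁻¹.mulVec w) hHc
      simpa [Matrix.mulVec_mulVec, Matrix.nonsing_inv_mul H hdetH, Matrix.one_mulVec,
        Matrix.mulVec_zero] using h3
    exact congrFun hcc j
  have ha0 : a ≠ 0 := fun h => hv0 (by rw [← hva, h, Matrix.mulVec_zero])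
  obtain ⟨j0, hj0⟩ : ∃ j, a j ≠ 0 := by
    by_contra hno; push_neg at hno; exact ha0 (funext hno)
  have hμj0 : μ j0 = (lam : ℂ) := by
    rcases mul_eq_zero.mp (hc0 j0) with h | h
    · exact absurd h hj0
    · exact sub_eq_zero.mp h
  have heigh : L.mulVec (fun i => H i j0) = (lam:ℂ) • (fun i => H i j0) := by
    rw [← hμj0]; exact hμ j0
  -- the primitive root and the exponent map
  haveI : NeZero p := ⟨hp.ne_zero⟩
  set ζ : ℂ := Complex.exp (2 * Real.pi * Complex.I / p) with hzeta
  have hζ : IsPrimitiveRoot ζ p := Complex.isPrimitiveRoot_exp p hp.ne_zero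
  have hpow : ∀ i : Fin n, ∃ m, m < p ∧ ζ ^ m = H i j0 := by
    intro i
    obtain ⟨m, hm, hme⟩ := hζ.eq_pow_of_pow_eq_one (hroot i j0)
    exact ⟨m, hm, hme⟩
  choose k hk1 hk2 using hpow
  set K : Fin n → Fin p := fun i => ⟨k i, hk1 i⟩ with hK
  set y : Fin p → Fin n → ℤ := fun m i => if K i = m then 1 else 0 with hy
  set w : Fin p → Fin n → ℤ := fun m => (lapOfInt A).mulVec (y m) - lam • (y m) with hw
  have hwcast : ∀ m i, ((w m i : ℂ)) = (∑ t, L i t * (y m t : ℂ)) - (lam:ℂ) * (y m i : ℂ) := by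
    intro m i
    simp only [hw, Pi.sub_apply, Pi.smul_apply, smul_eq_mul, Matrix.mulVec, dotProduct]
    push_cast
    simp [hL, Matrix.map_apply]
  have hcolsum : ∀ t, ∑ m : Fin p, ζ ^ (m:ℕ) * (y m t : ℂ) = H t j0 := by
    intro t
    rw [← hk2 t, Finset.sum_eq_single (K t)]
    · simp [hy, hK]
    · intro b _ hb; simp [hy, Ne.symm hb]
    · simp
  have hzero : ∀ i, ∑ m : Fin p, (ζ ^ (m:ℕ)) * (w m i : ℂ) = 0 := by
    intro i
    calc ∑ m : Fin p, ζ^(m:ℕ) * (w m i : ℂ)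
        = ∑ m : Fin p, ((∑ t, L i t * (ζ^(m:ℕ) * (y m t : ℂ))) - ζ^(m:ℕ) * ((lam:ℂ) * (y m i : ℂ))) := by
          apply Finset.sum_congr rfl; intro m _
          rw [hwcast m i, mul_sub, Finset.mul_sum]
          congr 1
          apply Finset.sum_congr rfl; intro t _; ring
      _ = (∑ t, L i t * (∑ m : Fin p, ζ^(m:ℕ) * (y m t : ℂ)))
          - (lam:ℂ) * ∑ m : Fin p, ζ^(m:ℕ) * (y m i : ℂ) := by
          rw [Finset.sum_sub_distrib, Finset.sum_comm]
          congr 1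
          · apply Finset.sum_congr rfl; intro t _; rw [Finset.mul_sum]
          · rw [Finset.mul_sum]; apply Finset.sum_congr rfl; intro m _; ring
      _ = (∑ t, L i t * H t j0) - (lam:ℂ) * H i j0 := by
          rw [hcolsum i]
          congr 1
          apply Finset.sum_congr rfl; intro t _; rw [hcolsum t]
      _ = 0 := by
          have h4 := congrFun heigh i
          simp only [Matrix.mulVec, dotProduct, Pi.smul_apply, smul_eq_mul] at h4
          rw [h4]; ring
  have hppos : 0 < p := hp.pos
  set mlast : Fin p := ⟨p - 1, by omega⟩ with hmlast
  have hweq : ∀ i, ∀ m : Fin p, w m i = w mlast i := by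
    intro i m
    set c : ℕ → ℤ := fun s => if hs : s < p then w ⟨s, hs⟩ i else 0 with hc
    have hsum : ∑ s ∈ Finset.range p, (c s : ℂ) * ζ ^ s = 0 := by
      rw [← Fin.sum_univ_eq_sum_range (fun s => (c s : ℂ) * ζ ^ s) p, ← hzero i]
      apply Finset.sum_congr rfl
      intro s _
      simp only [hc, dif_pos s.isLt, Fin.eta]
      ring
    have h1 := allEq hp hζ c hsum (m : ℕ) m.isLt
    simp only [hc, dif_pos m.isLt, dif_pos (show p - 1 < p by omega), Fin.eta] at h1
    exact h1
  have hysum : ∀ t, ∑ m : Fin p, y m t = 1 := by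
    intro t
    rw [Finset.sum_eq_single (K t)]
    · simp [hy]
    · intro b _ hb; simp [hy, Ne.symm hb]
    · simp
  have hwsum : ∀ i, ∑ m : Fin p, w m i = -lam := by
    intro i
    calc ∑ m : Fin p, w m i
        = ∑ m : Fin p, ((∑ t, lapOfInt A i t * y m t) - lam * y m i) := by
          apply Finset.sum_congr rfl; intro m _
          simp [hw, Matrix.mulVec, dotProduct]
      _ = (∑ t, lapOfInt A i t * (∑ m : Fin p, y m t)) - lam * ∑ m : Fin p, y m i := by
          rw [Finset.sum_sub_distrib, Finset.sum_comm, Finset.mul_sum]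
          congr 1
          apply Finset.sum_congr rfl; intro t _; rw [Finset.mul_sum]
      _ = -lam := by
          simp only [hysum, mul_one]
          rw [lap_row_sum A i]
          ring
  have hwp : ∀ i (m : Fin p), (p : ℤ) * w m i = -lam := by
    intro i m
    have hsame : ∑ m' : Fin p, w m' i = ∑ _m' : Fin p, w m i := by
      apply Finset.sum_congr rfl; intro m' _; rw [hweq i m', ← hweq i m]
    rw [hwsum i, Finset.sum_const, Finset.card_univ, Fintype.card_fin, nsmul_eq_mul] at hsame
    linarith [hsame]
  obtain ⟨i0⟩ := hiex
  have hdvd : (p:ℤ) ∣ lam := ⟨-(w mlast i0), by have := hwp i0 mlast; linarith⟩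
  have hKsurj : ∀ m : Fin p, ∃ i, K i = m := by
    intro m
    by_contra hno
    push_neg at hno
    have hy0 : y m = 0 := funext fun i => by simp [hy, hno i]
    have hw0 : w m = 0 := by
      rw [hw]; simp only [hy0, Matrix.mulVec_zero, smul_zero, sub_zero]
    have h5 := hwp i0 m
    rw [hw0] at h5
    simp at h5
    exact hlam h5
  -- eigenvectors
  have hueig : ∀ (m : Fin p),
      L.mulVec (fun i => ((y m i : ℂ) - (y mlast i : ℂ)))
        = (lam:ℂ) • (fun i => ((y m i : ℂ) - (y mlast i : ℂ))) := by
    intro m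
    funext i
    simp only [Matrix.mulVec, dotProduct, Pi.smul_apply, smul_eq_mul]
    have h1 := hwcast m i
    have h2 := hwcast mlast i
    have h3 : ((w m i : ℤ) : ℂ) = ((w mlast i : ℤ) : ℂ) := by exact_mod_cast congrArg (fun z : ℤ => (z:ℂ)) (hweq i m)
    have hsplit : ∑ t, L i t * ((y m t : ℂ) - (y mlast t : ℂ))
        = (∑ t, L i t * (y m t : ℂ)) - ∑ t, L i t * (y mlast t : ℂ) := by
      rw [← Finset.sum_sub_distrib]; apply Finset.sum_congr rfl; intros; ring
    rw [hsplit]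
    linear_combination h2 + h3 - h1
  have hp1 : ∀ s : Fin (p - 1), (s : ℕ) < p := fun s => Nat.lt_of_lt_of_le s.isLt (Nat.sub_le p 1)
  set u : Fin (p-1) → (Fin n → ℂ) :=
    fun s => fun i => ((y ⟨(s:ℕ), hp1 s⟩ i : ℂ) - (y mlast i : ℂ)) with hu
  have humem : ∀ s, u s ∈ Module.End.eigenspace (Matrix.toLin' L) (lam : ℂ) := by
    intro s
    rw [Module.End.mem_eigenspace_iff, Matrix.toLin'_apply]
    exact hueig _
  have huind : LinearIndependent ℂ u := by
    rw [Fintype.linearIndependent_iff]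
    intro t ht s
    obtain ⟨i, hi⟩ := hKsurj ⟨(s:ℕ), hp1 s⟩
    have hval := congrFun ht i
    simp only [hu, Finset.sum_apply, Pi.smul_apply, smul_eq_mul, Pi.zero_apply] at hval
    rw [Finset.sum_eq_single s] at hval
    · have hy1 : y ⟨(s:ℕ), hp1 s⟩ i = 1 := by simp [hy, hi]
      have hy2 : y mlast i = 0 := by
        have : K i ≠ mlast := by
          rw [hi, hmlast]
          exact Fin.ne_of_val_ne (show (s:ℕ) ≠ p - 1 by have := s.isLt; omega)
        simp [hy, this]
      rw [hy1, hy2] at hval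
      simpa using hval
    · intro b _ hbs
      have hyb : y ⟨(b:ℕ), hp1 b⟩ i = 0 := by
        have : K i ≠ ⟨(b:ℕ), hp1 b⟩ := by
          rw [hi]
          intro hcon
          exact hbs (Fin.ext (congrArg Fin.val hcon).symm)
        simp [hy, this]
      have hy2 : y mlast i = 0 := by
        have : K i ≠ mlast := by
          rw [hi, hmlast]
          exact Fin.ne_of_val_ne (show (s:ℕ) ≠ p - 1 by have := s.isLt; omega)
        simp [hy, this]
      rw [hyb, hy2]
      ring
    · intro hsm; exact absurd (Finset.mem_univ s) hsm
  refine ⟨hdvd, ?_⟩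
  have hspan : Submodule.span ℂ (Set.range u) ≤
      Module.End.eigenspace (Matrix.toLin' L) (lam : ℂ) :=
    Submodule.span_le.mpr (Set.range_subset_iff.mpr humem)
  have hfr := Submodule.finrank_mono hspan
  rw [finrank_span_eq_card huind, Fintype.card_fin] at hfr
  exact hfr
end

section
/- Let G1 and G2 be graphs on the same vertex set whose Laplacians are diagonalised by the same dephased complex Hadamard matrix H of order n, with L(G1) h_j = λ_j h_j, L(G2) h_j = μ_j h_j, and let d2 be the degree of the regular graph G2. Then the double cover G1 ⋉ G2, with Laplacian [[L(G1)+d2 I, −A(G2)],[−A(G2), L(G1)+d2 I]], has (e^{iγ} cos γ, −i e^{iγ} sin γ)-Laplacian fractional revival from (a,0) to (a,1) at time τ if and only if γ ≡ −d2 τ (mod π) and τ(λ_j + μ_j) ≡ τ(λ_j − μ_j) ≡ 0 (mod 2π) for all j. -/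
open Matrix Complex

/-- Fractional revival on the double cover `G1 ⋉ G2`: with both Laplacians
diagonalised by the same dephased complex Hadamard matrix `H`
(`L(G1)h_j = λ_j h_j`, `L(G2)h_j = μ_j h_j`) and `G2` regular of degree `d2`,
the double cover has `(e^{iγ}cos γ, −i e^{iγ}sin γ)`-Laplacian fractional
revival from `(a,0)` to `(a,1)` at time `τ` iff `γ ≡ −d2 τ (mod π)` and
`τ(λ_j + μ_j) ≡ τ(λ_j − μ_j) ≡ 0 (mod 2π)` for all `j`. -/
theorem stmt18 {n : ℕ} [NeZero n]
    (H : Matrix (Fin n) (Fin n) ℂ) (hH : IsCHadamard H) (hd : IsDephased H)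
    (A₁ A₂ : Matrix (Fin n) (Fin n) ℝ)
    (hs₁ : A₁.IsSymm) (hs₂ : A₂.IsSymm)
    (hn₁ : ∀ i j, 0 ≤ A₁ i j) (hn₂ : ∀ i j, 0 ≤ A₂ i j)
    (hd₁ : ∀ i, A₁ i i = 0) (hd₂ : ∀ i, A₂ i i = 0)
    (lam mu : Fin n → ℝ)
    (hlam : ∀ j, ((lapOf A₁).map Complex.ofReal).mulVec (fun i => H i j)
      = (lam j : ℂ) • (fun i => H i j))
    (hmu : ∀ j, ((lapOf A₂).map Complex.ofReal).mulVec (fun i => H i j)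
      = (mu j : ℂ) • (fun i => H i j))
    (d₂ : ℝ) (hreg : ∀ i, ∑ j, A₂ i j = d₂)
    (Lbig : Matrix (Fin n ⊕ Fin n) (Fin n ⊕ Fin n) ℂ)
    (hLbig : Lbig = Matrix.fromBlocks
      ((lapOf A₁).map Complex.ofReal + (d₂ : ℂ) • (1 : Matrix (Fin n) (Fin n) ℂ))
      (-(A₂.map Complex.ofReal)) (-(A₂.map Complex.ofReal))
      ((lapOf A₁).map Complex.ofReal + (d₂ : ℂ) • (1 : Matrix (Fin n) (Fin n) ℂ)))
    (a : Fin n) (τ γ : ℝ) (hβ : Real.sin γ ≠ 0) :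
    ((NormedSpace.exp ((-(Complex.I * (τ : ℂ))) • Lbig)).mulVec
        (Pi.single (Sum.inl a) 1 : Fin n ⊕ Fin n → ℂ)
      = (Complex.exp (γ * Complex.I) * Real.cos γ) •
          (Pi.single (Sum.inl a) 1 : Fin n ⊕ Fin n → ℂ)
        + (-Complex.I * Complex.exp (γ * Complex.I) * Real.sin γ) •
          (Pi.single (Sum.inr a) 1 : Fin n ⊕ Fin n → ℂ)) ↔
      ((∃ z : ℤ, γ = -d₂ * τ + z * Real.pi) ∧
        ∀ j : Fin n, (∃ z : ℤ, τ * (lam j + mu j) = 2 * Real.pi * z) ∧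
          (∃ z : ℤ, τ * (lam j - mu j) = 2 * Real.pi * z)) := by
  classical
  obtain ⟨habs, hHH⟩ := hH
  have hn0 : (n : ℂ) ≠ 0 := Nat.cast_ne_zero.mpr (NeZero.ne n)
  have h2n0 : (2 * (n : ℂ)) ≠ 0 := by simp [hn0]
  set Lc : Matrix (Fin n) (Fin n) ℂ := (lapOf A₁).map Complex.ofReal with hLcdef
  set Ac : Matrix (Fin n) (Fin n) ℂ := A₂.map Complex.ofReal with hAcdef
  -- matrix-level eigen identities
  have hL1 : Lc * H = H * Matrix.diagonal (fun j => (lam j : ℂ)) := by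
    ext i j
    have h := congrFun (hlam j) i
    simp only [Matrix.mulVec, dotProduct, Pi.smul_apply, smul_eq_mul] at h
    rw [Matrix.mul_apply, Matrix.mul_diagonal, h, mul_comm]
  have hL2 : ((lapOf A₂).map Complex.ofReal) * H
      = H * Matrix.diagonal (fun j => (mu j : ℂ)) := by
    ext i j
    have h := congrFun (hmu j) i
    simp only [Matrix.mulVec, dotProduct, Pi.smul_apply, smul_eq_mul] at h
    rw [Matrix.mul_apply, Matrix.mul_diagonal, h, mul_comm]
  have hlap2 : (lapOf A₂).map Complex.ofReal = (d₂ : ℂ) • 1 - Ac := by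
    rw [hAcdef]
    ext i j
    by_cases hij : i = j <;>
      simp [lapOf, Matrix.map_apply, Matrix.sub_apply, Matrix.diagonal_apply, hreg,
        Matrix.one_apply, hij, Matrix.smul_apply]
  have hA2 : Ac * H = H * Matrix.diagonal (fun j => (d₂ : ℂ) - mu j) := by
    have h : Ac = (d₂ : ℂ) • 1 - (lapOf A₂).map Complex.ofReal := by
      rw [hlap2]; abel
    rw [h, Matrix.sub_mul, Matrix.smul_mul, Matrix.one_mul, hL2]
    ext i j
    simp only [Matrix.sub_apply, Matrix.smul_apply, Matrix.mul_diagonal, smul_eq_mul]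
    ring
  have hMH : (Lc + (d₂ : ℂ) • 1) * H = H * Matrix.diagonal (fun j => (lam j : ℂ) + d₂) := by
    rw [Matrix.add_mul, Matrix.smul_mul, Matrix.one_mul, hL1]
    ext i j
    simp only [Matrix.add_apply, Matrix.smul_apply, Matrix.mul_diagonal, smul_eq_mul]
    ring
  -- the diagonalising matrix
  set U : Matrix (Fin n ⊕ Fin n) (Fin n ⊕ Fin n) ℂ := Matrix.fromBlocks H H H (-H) with hUdef
  set Dv : (Fin n ⊕ Fin n) → ℂ :=
    Sum.elim (fun j => (lam j : ℂ) + mu j) (fun j => (lam j : ℂ) - mu j + 2 * d₂) with hDvdef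
  have bTL : (Lc + (d₂ : ℂ) • 1) * H + -Ac * H
      = H * Matrix.diagonal (fun j => (lam j : ℂ) + mu j) := by
    rw [Matrix.neg_mul, hMH, hA2]
    ext i j
    simp only [Matrix.add_apply, Matrix.neg_apply, Matrix.mul_diagonal]
    ring
  have bTR : (Lc + (d₂ : ℂ) • 1) * H + -Ac * -H
      = H * Matrix.diagonal (fun j => (lam j : ℂ) - mu j + 2 * d₂) := by
    rw [Matrix.neg_mul, Matrix.mul_neg, neg_neg, hMH, hA2]
    ext i j
    simp only [Matrix.add_apply, Matrix.mul_diagonal]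
    ring
  have bBL : -Ac * H + (Lc + (d₂ : ℂ) • 1) * H
      = H * Matrix.diagonal (fun j => (lam j : ℂ) + mu j) := by
    rw [Matrix.neg_mul, hMH, hA2]
    ext i j
    simp only [Matrix.add_apply, Matrix.neg_apply, Matrix.mul_diagonal]
    ring
  have bBR : -Ac * H + (Lc + (d₂ : ℂ) • 1) * -H
      = (-H) * Matrix.diagonal (fun j => (lam j : ℂ) - mu j + 2 * d₂) := by
    rw [Matrix.neg_mul, Matrix.mul_neg, Matrix.neg_mul, hMH, hA2]
    ext i j
    simp only [Matrix.add_apply, Matrix.neg_apply, Matrix.mul_diagonal]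
    ring
  have hcomm : Lbig * U = U * Matrix.diagonal Dv := by
    rw [hLbig, hUdef, hDvdef, ← Matrix.fromBlocks_diagonal, Matrix.fromBlocks_multiply,
      Matrix.fromBlocks_multiply]
    simp only [Matrix.mul_zero, add_zero, zero_add]
    rw [bTL, bTR, bBL, bBR]
  -- U is (2n)·unitary
  have hHHn : H * Hᴴ = (n : ℂ) • 1 := by
    rw [hHH]; norm_num
  have hUU : U * Uᴴ = (2 * (n : ℂ)) • 1 := by
    rw [hUdef, Matrix.fromBlocks_conjTranspose, Matrix.fromBlocks_multiply]
    have h0 : H * Hᴴ + H * (-H)ᴴ = 0 := by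
      rw [Matrix.conjTranspose_neg, Matrix.mul_neg, add_neg_cancel]
    have h0' : H * Hᴴ + -H * Hᴴ = 0 := by
      rw [Matrix.neg_mul, add_neg_cancel]
    have h1' : H * Hᴴ + -H * (-H)ᴴ = (2 * (n : ℂ)) • 1 := by
      rw [Matrix.conjTranspose_neg, Matrix.neg_mul, Matrix.mul_neg, neg_neg, hHHn, two_mul,
        add_smul]
    have h2 : H * Hᴴ + H * Hᴴ = (2 * (n : ℂ)) • 1 := by
      rw [hHHn, two_mul, add_smul]
    rw [h0, h0', h1', h2, ← Matrix.fromBlocks_one, Matrix.fromBlocks_smul, smul_zero]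
  have hright : U * ((2 * (n : ℂ))⁻¹ • Uᴴ) = 1 := by
    rw [Matrix.mul_smul, hUU, smul_smul, inv_mul_cancel₀ h2n0, one_smul]
  have hUinvle : Invertible U := invertibleOfRightInverse U _ hright
  have hUunit : IsUnit U := isUnit_of_invertible U
  have hUinv : U⁻¹ = (2 * (n : ℂ))⁻¹ • Uᴴ := Matrix.inv_eq_right_inv hright
  have hLbig' : Lbig = U * Matrix.diagonal Dv * U⁻¹ := by
    rw [← hcomm, Matrix.mul_inv_cancel_right_of_invertible]
  -- the exponential
  have hexp : NormedSpace.exp ((-(Complex.I * (τ : ℂ))) • Lbig)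
      = U * Matrix.diagonal (fun k => Complex.exp (-(Complex.I * τ) * Dv k)) * U⁻¹ := by
    rw [hLbig']
    have hsm : (-(Complex.I * (τ : ℂ))) • (U * Matrix.diagonal Dv * U⁻¹)
        = U * ((-(Complex.I * (τ : ℂ))) • Matrix.diagonal Dv) * U⁻¹ := by
      rw [Matrix.mul_smul, Matrix.smul_mul]
    rw [hsm, Matrix.exp_conj U _ hUunit, ← Matrix.diagonal_smul, Matrix.exp_diagonal]
    have hfun : NormedSpace.exp ((-(Complex.I * (τ : ℂ))) • Dv)
        = fun k => Complex.exp (-(Complex.I * τ) * Dv k) := by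
      funext k
      simp [Pi.coe_exp, Complex.exp_eq_exp_ℂ]
    rw [hfun]
  -- abbreviations appearing in the goal
  rw [hexp]
  set E : Matrix (Fin n ⊕ Fin n) (Fin n ⊕ Fin n) ℂ :=
    Matrix.diagonal (fun k => Complex.exp (-(Complex.I * (τ : ℂ)) * Dv k)) with hEdef
  set α : ℂ := Complex.exp ((γ : ℂ) * Complex.I) * ((Real.cos γ : ℝ) : ℂ) with hαdef
  set β : ℂ := -Complex.I * Complex.exp ((γ : ℂ) * Complex.I) * ((Real.sin γ : ℝ) : ℂ) with hβdef
  have hinj : Function.Injective U.mulVec := Matrix.mulVec_injective_iff_isUnit.mpr hUunit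
  have step1 : (U * E * U⁻¹).mulVec ((Pi.single (Sum.inl a) 1 : Fin n ⊕ Fin n → ℂ))
      = U.mulVec (E.mulVec (U⁻¹.mulVec ((Pi.single (Sum.inl a) 1 : Fin n ⊕ Fin n → ℂ)))) := by
    rw [Matrix.mulVec_mulVec, Matrix.mulVec_mulVec]
  have step2 : α • (Pi.single (Sum.inl a) 1 : Fin n ⊕ Fin n → ℂ) + β • (Pi.single (Sum.inr a) 1 : Fin n ⊕ Fin n → ℂ)
      = U.mulVec (U⁻¹.mulVec (α • (Pi.single (Sum.inl a) 1 : Fin n ⊕ Fin n → ℂ) + β • (Pi.single (Sum.inr a) 1 : Fin n ⊕ Fin n → ℂ))) := by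
    rw [Matrix.mulVec_mulVec, Matrix.mul_inv_of_invertible, Matrix.one_mulVec]
  rw [step1, step2, hinj.eq_iff]
  have hcvec : ∀ p : Fin n ⊕ Fin n, U⁻¹.mulVec (Pi.single p 1)
      = fun k => (2 * (n : ℂ))⁻¹ * star (U p k) := by
    intro p
    rw [hUinv, Matrix.smul_mulVec, Matrix.mulVec_single]
    funext k
    simp [Matrix.conjTranspose_apply]
  have hdecomp : U⁻¹.mulVec (α • (Pi.single (Sum.inl a) 1 : Fin n ⊕ Fin n → ℂ) + β • (Pi.single (Sum.inr a) 1 : Fin n ⊕ Fin n → ℂ))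
      = fun k => (2 * (n : ℂ))⁻¹ * (α * star (U (Sum.inl a) k) + β * star (U (Sum.inr a) k)) := by
    rw [Matrix.mulVec_add, Matrix.mulVec_smul, Matrix.mulVec_smul, hcvec, hcvec]
    funext k
    simp only [Pi.add_apply, Pi.smul_apply, smul_eq_mul]
    ring
  have hleft : E.mulVec (U⁻¹.mulVec ((Pi.single (Sum.inl a) 1 : Fin n ⊕ Fin n → ℂ)))
      = fun k => Complex.exp (-(Complex.I * (τ : ℂ)) * Dv k)
          * ((2 * (n : ℂ))⁻¹ * star (U (Sum.inl a) k)) := by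
    rw [hcvec]
    funext k
    simp [hEdef, Matrix.mulVec_diagonal]
  rw [hleft, hdecomp, funext_iff]
  simp only [hUdef, hDvdef, Sum.forall, Sum.elim_inl, Sum.elim_inr,
    Matrix.fromBlocks_apply₁₁, Matrix.fromBlocks_apply₁₂, Matrix.fromBlocks_apply₂₁,
    Matrix.fromBlocks_apply₂₂, Matrix.neg_apply, star_neg, mul_neg]
  -- scalar facts
  have hαβ1 : α + β = 1 := by
    rw [hαdef, hβdef, Complex.ofReal_cos, Complex.ofReal_sin, Complex.exp_mul_I]
    linear_combination Complex.sin_sq_add_cos_sq (γ : ℂ) - Complex.sin (γ : ℂ) ^ 2 * Complex.I_sq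
  have hαβ2 : α - β = Complex.exp (2 * (γ : ℂ) * Complex.I) := by
    rw [hαdef, hβdef, Complex.ofReal_cos, Complex.ofReal_sin, Complex.exp_mul_I,
      Complex.exp_mul_I, Complex.cos_two_mul, Complex.sin_two_mul]
    linear_combination -Complex.sin_sq_add_cos_sq (γ : ℂ) + Complex.sin (γ : ℂ) ^ 2 * Complex.I_sq
  have hIinj : ∀ x y : ℝ, (x : ℂ) * Complex.I = (y : ℂ) * Complex.I → x = y := by
    intro x y h
    have := mul_right_cancel₀ Complex.I_ne_zero h
    exact_mod_cast this
  have hrowsum : ∀ (B : Matrix (Fin n) (Fin n) ℝ) (i : Fin n), ∑ k, lapOf B i k = 0 := by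
    intro B i
    simp [lapOf, Matrix.sub_apply, Matrix.diagonal_apply, Finset.sum_sub_distrib,
      Finset.sum_ite_eq]
  have hlam0 : lam 0 = 0 := by
    have h := congrFun (hlam 0) 0
    simp only [Matrix.mulVec, dotProduct, Matrix.map_apply, hd.1, mul_one,
      Pi.smul_apply, smul_eq_mul] at h
    have h' : ((∑ k, lapOf A₁ 0 k : ℝ) : ℂ) = (lam 0 : ℂ) := by
      push_cast
      exact h
    rw [hrowsum] at h'
    exact_mod_cast h'.symm
  have hmu0 : mu 0 = 0 := by
    have h := congrFun (hmu 0) 0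
    simp only [Matrix.mulVec, dotProduct, Matrix.map_apply, hd.1, mul_one,
      Pi.smul_apply, smul_eq_mul] at h
    have h' : ((∑ k, lapOf A₂ 0 k : ℝ) : ℂ) = (mu 0 : ℂ) := by
      push_cast
      rw [h]
    rw [hrowsum] at h'
    exact_mod_cast h'.symm
  have hstar_ne : ∀ j, star (H a j) ≠ 0 := by
    intro j
    simp only [star_ne_zero]
    intro h0
    have := habs a j
    rw [h0] at this
    simp at this
  have hw_ne : ∀ j, (2 * (n : ℂ))⁻¹ * star (H a j) ≠ 0 :=
    fun j => mul_ne_zero (inv_ne_zero h2n0) (hstar_ne j)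
  constructor
  · rintro ⟨h₁, h₂⟩
    have hP1 : ∀ j, Complex.exp (-(Complex.I * (τ : ℂ)) * ((lam j : ℂ) + mu j)) = α + β := by
      intro j
      apply mul_left_cancel₀ (hw_ne j)
      linear_combination h₁ j
    have hP2 : ∀ j, Complex.exp (-(Complex.I * (τ : ℂ)) * ((lam j : ℂ) - mu j + 2 * d₂))
        = α - β := by
      intro j
      apply mul_left_cancel₀ (hw_ne j)
      linear_combination h₂ j
    constructor
    · have h0 := hP2 0
      rw [hαβ2] at h0
      obtain ⟨m, hm⟩ := Complex.exp_eq_exp_iff_exists_int.mp h0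
      have hr : -(τ * (lam 0 - mu 0 + 2 * d₂)) = 2 * γ + m * (2 * Real.pi) := by
        apply hIinj
        push_cast
        linear_combination hm
      rw [hlam0, hmu0] at hr
      exact ⟨-m, by push_cast; linear_combination -hr / 2⟩
    · intro j
      constructor
      · have h1 := hP1 j
        rw [hαβ1] at h1
        obtain ⟨m, hm⟩ := Complex.exp_eq_one_iff.mp h1
        have hr : -(τ * (lam j + mu j)) = m * (2 * Real.pi) := by
          apply hIinj
          push_cast
          linear_combination hm
        exact ⟨-m, by push_cast; linear_combination -hr⟩
      · have hj := (hP2 j).trans (hP2 0).symm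
        obtain ⟨m, hm⟩ := Complex.exp_eq_exp_iff_exists_int.mp hj
        have hr : -(τ * (lam j - mu j + 2 * d₂))
            = -(τ * (lam 0 - mu 0 + 2 * d₂)) + m * (2 * Real.pi) := by
          apply hIinj
          push_cast
          linear_combination hm
        rw [hlam0, hmu0] at hr
        exact ⟨-m, by push_cast; linear_combination -hr⟩
  · rintro ⟨⟨z, hz⟩, hj⟩
    have hE1 : ∀ j, Complex.exp (-(Complex.I * (τ : ℂ)) * ((lam j : ℂ) + mu j)) = 1 := by
      intro j
      obtain ⟨z₁, hz₁⟩ := (hj j).1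
      refine Complex.exp_eq_one_iff.mpr ⟨-z₁, ?_⟩
      have hzC : ((τ * (lam j + mu j) : ℝ) : ℂ) = ((2 * Real.pi * z₁ : ℝ) : ℂ) := by
        rw [hz₁]
      push_cast at hzC ⊢
      linear_combination -Complex.I * hzC
    have hE2 : ∀ j, Complex.exp (-(Complex.I * (τ : ℂ)) * ((lam j : ℂ) - mu j + 2 * d₂))
        = Complex.exp (2 * (γ : ℂ) * Complex.I) := by
      intro j
      obtain ⟨z₂, hz₂⟩ := (hj j).2
      refine Complex.exp_eq_exp_iff_exists_int.mpr ⟨-z₂ - z, ?_⟩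
      have hz₂C : ((τ * (lam j - mu j) : ℝ) : ℂ) = ((2 * Real.pi * z₂ : ℝ) : ℂ) := by
        rw [hz₂]
      have hzC : ((γ : ℝ) : ℂ) = ((-d₂ * τ + z * Real.pi : ℝ) : ℂ) := by
        rw [hz]
      push_cast at hz₂C hzC ⊢
      linear_combination -Complex.I * hz₂C - 2 * Complex.I * hzC
    constructor
    · intro j
      linear_combination ((2 * (n : ℂ))⁻¹ * star (H a j)) * hE1 j
        - ((2 * (n : ℂ))⁻¹ * star (H a j)) * hαβ1
    · intro j
      linear_combination ((2 * (n : ℂ))⁻¹ * star (H a j)) * hE2 j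
        - ((2 * (n : ℂ))⁻¹ * star (H a j)) * hαβ2
end
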